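/- arXiv:2506.01101 — 7 statements merged into one kernel-verified Lean document; each statement's English description precedes it below -/
import Mathlib

section
/- Let l : ℝ → ℝ be non-constant, (weakly) increasing and continuous, let λ ∈ ℝ, and let X ∈ 𝒳_l. Then the function g_X(t) = E[l(−X−t)] − λ is continuous and (weakly) decreasing on ℝ. Moreover, if there exist t_u, t_l ∈ ℝ such that g_X(t_u) ≤ 0 < g_X(t_l), then SR_{l,λ}(X) is finite and g_X(SR_{l,λ}(X)) = 0. -/
open MeasureTheory Filter

/-- For `l` non-constant, increasing and continuous, `X ∈ 𝒳_l`, the function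
`g_X(t) = E[l(-X-t)] - λ` is continuous and decreasing; moreover, under the bracketing
condition, `SR_{l,λ}(X)` is finite (the defining set is nonempty and bounded below) and is
a root of `g_X`. -/
theorem ubsr_root_of_g
    {Ω : Type*} [MeasurableSpace Ω] (P : Measure Ω) [IsProbabilityMeasure P]
    (l : ℝ → ℝ) (lam : ℝ) (X : Ω → ℝ)
    (hl_nonconst : ∃ x y : ℝ, l x ≠ l y)
    (hl_mono : Monotone l)
    (hl_cont : Continuous l)
    (hX : ∀ t : ℝ, Integrable (fun ω => l (-X ω - t)) P) :
    Continuous (fun t : ℝ => (∫ ω, l (-X ω - t) ∂P) - lam) ∧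
    Antitone (fun t : ℝ => (∫ ω, l (-X ω - t) ∂P) - lam) ∧
    (∀ tu tl : ℝ,
      (∫ ω, l (-X ω - tu) ∂P) - lam ≤ 0 →
      0 < (∫ ω, l (-X ω - tl) ∂P) - lam →
      ({t : ℝ | (∫ ω, l (-X ω - t) ∂P) ≤ lam}).Nonempty ∧
      BddBelow {t : ℝ | (∫ ω, l (-X ω - t) ∂P) ≤ lam} ∧
      (∫ ω, l (-X ω - sInf {t : ℝ | (∫ ω, l (-X ω - t) ∂P) ≤ lam}) ∂P) - lam = 0) := by
  have hcont0 : Continuous (fun t : ℝ => ∫ ω, l (-X ω - t) ∂P) := by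
    rw [continuous_iff_continuousAt]
    intro t0
    apply continuousAt_of_dominated
      (bound := fun ω => |l (-X ω - (t0 - 1))| + |l (-X ω - (t0 + 1))|)
    · exact Eventually.of_forall fun t => (hX t).aestronglyMeasurable
    · filter_upwards [Ioo_mem_nhds (show t0 - 1 < t0 by linarith)
        (show t0 < t0 + 1 by linarith)] with t ht
      filter_upwards with ω
      have h1 : l (-X ω - t) ≤ l (-X ω - (t0 - 1)) := hl_mono (by linarith [ht.1])
      have h2 : l (-X ω - (t0 + 1)) ≤ l (-X ω - t) := hl_mono (by linarith [ht.2])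
      rw [Real.norm_eq_abs, abs_le]
      constructor
      · have := neg_abs_le (l (-X ω - (t0 + 1)))
        have := abs_nonneg (l (-X ω - (t0 - 1)))
        linarith
      · have := le_abs_self (l (-X ω - (t0 - 1)))
        have := abs_nonneg (l (-X ω - (t0 + 1)))
        linarith
    · exact (hX (t0 - 1)).abs.add (hX (t0 + 1)).abs
    · filter_upwards with ω
      exact (hl_cont.comp (continuous_const.sub continuous_id)).continuousAt
  have hanti : Antitone (fun t : ℝ => (∫ ω, l (-X ω - t) ∂P) - lam) := by
    intro a b hab
    have := integral_mono (hX b) (hX a) (fun ω => hl_mono (by linarith))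
    dsimp only
    linarith
  refine ⟨hcont0.sub continuous_const, hanti, ?_⟩
  intro tu tl htu htl
  set S := {t : ℝ | (∫ ω, l (-X ω - t) ∂P) ≤ lam} with hS
  have hne : S.Nonempty := ⟨tu, by simp only [hS, Set.mem_setOf_eq]; linarith⟩
  have hbdd : BddBelow S := by
    refine ⟨tl, fun t ht => ?_⟩
    by_contra hlt
    push_neg at hlt
    have := hanti hlt.le
    simp only at this
    have : (∫ ω, l (-X ω - t) ∂P) - lam > 0 := lt_of_lt_of_le htl this
    exact absurd ht (by simp only [hS, Set.mem_setOf_eq]; linarith)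
  refine ⟨hne, hbdd, ?_⟩
  have hclosed : IsClosed S := isClosed_le hcont0 continuous_const
  have hmem : sInf S ∈ S := hclosed.csInf_mem hne hbdd
  have hle : (∫ ω, l (-X ω - sInf S) ∂P) ≤ lam := hmem
  have hge : lam ≤ ∫ ω, l (-X ω - sInf S) ∂P := by
    have htend : Tendsto (fun t : ℝ => ∫ ω, l (-X ω - t) ∂P) (nhdsWithin (sInf S) (Set.Iio (sInf S)))
        (nhds (∫ ω, l (-X ω - sInf S) ∂P)) :=
      (hcont0.tendsto (sInf S)).mono_left nhdsWithin_le_nhds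
    refine ge_of_tendsto htend ?_
    filter_upwards [self_mem_nhdsWithin] with t ht
    have hnot : t ∉ S := fun hmem' => absurd (csInf_le hbdd hmem') (not_le.mpr ht)
    exact le_of_lt (not_le.mp hnot)
  linarith
end

section
/- Let l : ℝ → ℝ be continuous and strictly increasing, let λ ∈ ℝ, and let X ∈ 𝒳_l. Then the function g_X(t) = E[l(−X−t)] − λ is continuous and strictly decreasing on ℝ. Moreover, if there exist t_u, t_l ∈ ℝ such that g_X(t_u) ≤ 0 < g_X(t_l), then SR_{l,λ}(X) is finite and is the unique root of g_X, i.e., g_X(SR_{l,λ}(X)) = 0 and g_X(t) ≠ 0 for every t ≠ SR_{l,λ}(X). -/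
open MeasureTheory

/-- For `l` continuous and strictly increasing and `X ∈ 𝒳_l`, the function
`g_X(t) = E[l(-X-t)] - λ` is continuous and strictly decreasing; moreover, under the
bracketing condition, `SR_{l,λ}(X)` is finite (the defining set is nonempty and bounded
below) and is the unique root of `g_X`. -/
theorem ubsr_unique_root_of_g
    {Ω : Type*} [MeasurableSpace Ω] (P : Measure Ω) [IsProbabilityMeasure P]
    (l : ℝ → ℝ) (lam : ℝ) (X : Ω → ℝ)
    (hl_cont : Continuous l)
    (hl_mono : StrictMono l)
    (hX : ∀ t : ℝ, Integrable (fun ω => l (-X ω - t)) P) :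
    Continuous (fun t : ℝ => (∫ ω, l (-X ω - t) ∂P) - lam) ∧
    StrictAnti (fun t : ℝ => (∫ ω, l (-X ω - t) ∂P) - lam) ∧
    (∀ tu tl : ℝ,
      (∫ ω, l (-X ω - tu) ∂P) - lam ≤ 0 →
      0 < (∫ ω, l (-X ω - tl) ∂P) - lam →
      ({t : ℝ | (∫ ω, l (-X ω - t) ∂P) ≤ lam}).Nonempty ∧
      BddBelow {t : ℝ | (∫ ω, l (-X ω - t) ∂P) ≤ lam} ∧
      (∫ ω, l (-X ω - sInf {t : ℝ | (∫ ω, l (-X ω - t) ∂P) ≤ lam}) ∂P) - lam = 0 ∧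
      (∀ t : ℝ, t ≠ sInf {t : ℝ | (∫ ω, l (-X ω - t) ∂P) ≤ lam} →
        (∫ ω, l (-X ω - t) ∂P) - lam ≠ 0)) := by
  set g : ℝ → ℝ := fun t => (∫ ω, l (-X ω - t) ∂P) - lam with hg
  -- continuity
  have hcont : Continuous g := by
    rw [continuous_iff_continuousAt]
    intro t0
    have hc : ContinuousAt (fun t : ℝ => ∫ ω, l (-X ω - t) ∂P) t0 := by
      apply continuousAt_of_dominated (bound := fun ω => |l (-X ω - (t0 - 1))| + |l (-X ω - (t0 + 1))|)
      · exact Filter.Eventually.of_forall fun t => (hX t).aestronglyMeasurable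
      · have hnb : Set.Ioo (t0 - 1) (t0 + 1) ∈ nhds t0 :=
          Ioo_mem_nhds (by linarith) (by linarith)
        filter_upwards [hnb] with t ht
        apply Filter.Eventually.of_forall
        intro ω
        have h1 : l (-X ω - t) ≤ l (-X ω - (t0 - 1)) :=
          hl_mono.monotone (by linarith [ht.1])
        have h2 : l (-X ω - (t0 + 1)) ≤ l (-X ω - t) :=
          hl_mono.monotone (by linarith [ht.2])
        rw [Real.norm_eq_abs, abs_le]
        constructor
        · nlinarith [abs_nonneg (l (-X ω - (t0 - 1))), neg_abs_le (l (-X ω - (t0 + 1)))]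
        · nlinarith [abs_nonneg (l (-X ω - (t0 + 1))), le_abs_self (l (-X ω - (t0 - 1)))]
      · exact ((hX (t0 - 1)).abs).add ((hX (t0 + 1)).abs)
      · apply Filter.Eventually.of_forall
        intro ω
        exact (hl_cont.comp (by continuity : Continuous fun t : ℝ => -X ω - t)).continuousAt
    exact (hc.sub continuousAt_const)
  have hanti : StrictAnti g := by
    intro a b hab
    have hpt : ∀ ω, l (-X ω - b) < l (-X ω - a) := fun ω => hl_mono (by linarith)
    have hint : Integrable (fun ω => l (-X ω - a) - l (-X ω - b)) P := (hX a).sub (hX b)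
    have hpos : 0 < ∫ ω, (l (-X ω - a) - l (-X ω - b)) ∂P := by
      rw [integral_pos_iff_support_of_nonneg (fun ω => by dsimp; linarith [hpt ω]) hint]
      have : (Function.support fun ω => l (-X ω - a) - l (-X ω - b)) = Set.univ := by
        ext ω; simp [Function.support, sub_ne_zero.mpr (hpt ω).ne']
      rw [this]
      simp [IsProbabilityMeasure.ne_zero P]
    rw [integral_sub (hX a) (hX b)] at hpos
    show (∫ ω, l (-X ω - b) ∂P) - lam < (∫ ω, l (-X ω - a) ∂P) - lam
    linarith
  refine ⟨hcont, hanti, fun tu tl htu htl => ?_⟩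
  set S : Set ℝ := {t : ℝ | (∫ ω, l (-X ω - t) ∂P) ≤ lam} with hS
  have htl' : 0 < g tl := htl
  have hSg : ∀ t, t ∈ S ↔ g t ≤ 0 := by
    intro t; simp [hS, hg, sub_nonpos]
  have hne : S.Nonempty := ⟨tu, (hSg tu).2 htu⟩
  have hbdd : BddBelow S := by
    refine ⟨tl, fun t ht => ?_⟩
    by_contra h
    push_neg at h
    have h2 := hanti h
    have := (hSg t).1 ht
    linarith
  have hSeq : S = {t | g t ≤ 0} := Set.ext fun t => hSg t
  have hclosed : IsClosed S := by
    rw [hSeq]; exact isClosed_le hcont continuous_const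
  have hmem : sInf S ∈ S := hclosed.csInf_mem hne hbdd
  have hle : g (sInf S) ≤ 0 := (hSg _).1 hmem
  have hS0 : g (sInf S) = 0 := by
    rcases lt_or_eq_of_le hle with hlt | heq
    · exfalso
      have hopen : IsOpen {t : ℝ | g t < 0} := isOpen_lt hcont continuous_const
      rcases Metric.isOpen_iff.1 hopen _ hlt with ⟨ε, hε, hball⟩
      have hmem' : sInf S - ε / 2 ∈ S := by
        refine (hSg _).2 (le_of_lt (hball ?_))
        rw [Metric.mem_ball, Real.dist_eq]
        rw [abs_of_nonpos (by linarith)]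
        linarith
      have := csInf_le hbdd hmem'
      linarith
    · exact heq
  refine ⟨hne, hbdd, hS0, ?_⟩
  intro t ht hroot
  have : g t = g (sInf S) := by rw [hS0]; exact hroot
  exact ht (hanti.injective this)
end

section
/- Let l : ℝ → ℝ be non-constant, (weakly) increasing, continuous and convex, let λ ∈ ℝ, and suppose that for every X ∈ 𝒳_l there exist t_u(X), t_l(X) ∈ ℝ with g_X(t_u(X)) ≤ 0 < g_X(t_l(X)). Then the acceptance set 𝒜_{l,λ} = { X ∈ 𝒳_l : SR_{l,λ}(X) ≤ 0 } is convex, and SR_{l,λ} is convex on 𝒳_l: for all X₁, X₂ ∈ 𝒳_l and α ∈ [0,1], SR_{l,λ}(αX₁ + (1−α)X₂) ≤ α·SR_{l,λ}(X₁) + (1−α)·SR_{l,λ}(X₂). -/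
open MeasureTheory

/-- The utility-based shortfall risk `SR_{l,λ}(X) = inf { t : E[l(-X-t)] ≤ λ }`. -/
noncomputable def SR {Ω : Type*} [MeasurableSpace Ω] (P : Measure Ω)
    (l : ℝ → ℝ) (lam : ℝ) (X : Ω → ℝ) : ℝ :=
  sInf {t : ℝ | (∫ ω, l (-X ω - t) ∂P) ≤ lam}

private lemma l_facts {l : ℝ → ℝ}
    (hl_nonconst : ∃ x y : ℝ, l x ≠ l y)
    (hl_mono : Monotone l)
    (hl_convex : ConvexOn ℝ Set.univ l) :
    ∃ b : ℝ, StrictMonoOn l (Set.Ici b) ∧ ∀ z : ℝ, ∃ x : ℝ, b ≤ x ∧ z < l x := by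
  obtain ⟨x, y, hxy⟩ := hl_nonconst
  obtain ⟨a, b, hab, hlab⟩ : ∃ a b : ℝ, a < b ∧ l a < l b := by
    rcases lt_trichotomy x y with h | h | h
    · exact ⟨x, y, h, lt_of_le_of_ne (hl_mono h.le) hxy⟩
    · exact absurd (congrArg l h) hxy
    · exact ⟨y, x, h, lt_of_le_of_ne (hl_mono h.le) (Ne.symm hxy)⟩
  refine ⟨b, ?_, ?_⟩
  · intro u hu v hv huv
    have hau : a < u := lt_of_lt_of_le hab hu
    have h1 : (l u - l a) / (u - a) ≤ (l v - l u) / (v - u) :=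
      hl_convex.slope_mono_adjacent (Set.mem_univ a) (Set.mem_univ v) hau huv
    have h2 : 0 < (l u - l a) / (u - a) := by
      apply div_pos
      · have : l b ≤ l u := hl_mono hu
        linarith
      · linarith
    have h3 : 0 < (l v - l u) / (v - u) := lt_of_lt_of_le h2 h1
    have h4 : 0 < v - u := by linarith
    have h5 : 0 < (l v - l u) / (v - u) * (v - u) := mul_pos h3 h4
    rw [div_mul_cancel₀ _ (by linarith : v - u ≠ 0)] at h5
    linarith
  · intro z
    set c := (l b - l a) / (b - a) with hc_def
    have hc : 0 < c := div_pos (by linarith) (by linarith)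
    set d := max (z - l b) 0 with hd_def
    have hd : 0 ≤ d := le_max_right _ _
    have hdc : 0 ≤ d / c := div_nonneg hd hc.le
    set x := b + d / c + 1 with hx_def
    have hbx : b < x := by rw [hx_def]; linarith
    have h1 : c ≤ (l x - l b) / (x - b) :=
      hl_convex.slope_mono_adjacent (Set.mem_univ a) (Set.mem_univ x) hab hbx
    have h2 : c * (x - b) ≤ l x - l b := by
      have h := mul_le_mul_of_nonneg_right h1 (by linarith : (0:ℝ) ≤ x - b)
      rwa [div_mul_cancel₀ _ (by linarith : x - b ≠ 0)] at h
    refine ⟨x, by linarith, ?_⟩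
    have h3 : c * (x - b) = d + c := by
      rw [hx_def]; field_simp; ring
    have hzd : z - l b ≤ d := le_max_left _ _
    nlinarith

private lemma aemeas_of_comp {Ω : Type*} [MeasurableSpace Ω] (P : Measure Ω)
    {l : ℝ → ℝ} {b : ℝ} (hl_mono : Monotone l)
    (hsm : StrictMonoOn l (Set.Ici b))
    (hbdd : ∀ z : ℝ, ∃ x : ℝ, b ≤ x ∧ z < l x)
    {g : Ω → ℝ}
    (h : ∀ t : ℝ, AEStronglyMeasurable (fun ω => l (g ω - t)) P) :
    AEMeasurable g P := by
  classical
  set φ : ℝ → ℝ := fun z => sSup {x | b ≤ x ∧ l x ≤ max z (l b)} with hφ_def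
  have hbddS : ∀ z : ℝ, BddAbove {x | b ≤ x ∧ l x ≤ max z (l b)} := by
    intro z
    obtain ⟨x₀, hx₀b, hx₀⟩ := hbdd (max z (l b))
    refine ⟨x₀, fun x hx => ?_⟩
    by_contra hlt
    push_neg at hlt
    have h1 : l x₀ ≤ l x := hl_mono hlt.le
    have h2 := hx.2
    linarith
  have hφ_mono : Monotone φ := by
    intro z₁ z₂ h12
    refine csSup_le_csSup (hbddS z₂) ⟨b, ⟨le_refl b, le_max_right _ _⟩⟩ ?_
    intro x hx
    exact ⟨hx.1, le_trans hx.2 (max_le_max h12 le_rfl)⟩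
  have hφ_inv : ∀ x : ℝ, b ≤ x → φ (l x) = x := by
    intro x hbx
    apply IsGreatest.csSup_eq
    constructor
    · exact ⟨hbx, le_max_left _ _⟩
    · intro y hy
      by_contra hlt
      push_neg at hlt
      have h1 : l x < l y := hsm hbx (le_trans hbx hlt.le) hlt
      have h2 : l y ≤ max (l x) (l b) := hy.2
      have h3 : max (l x) (l b) = l x := max_eq_left (hl_mono hbx)
      rw [h3] at h2
      linarith
  have hT : ∀ n : ℕ, AEMeasurable (fun ω => max (g ω + n) b - n) P := by
    intro n
    have h1 : AEMeasurable (fun ω => l (g ω + n)) P := by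
      have := (h (-(n:ℝ))).aemeasurable
      simpa [sub_neg_eq_add] using this
    have h2 : AEMeasurable (fun ω => φ (max (l (g ω + n)) (l b)) - n) P :=
      ((hφ_mono.measurable).comp_aemeasurable (h1.max aemeasurable_const)).sub
        aemeasurable_const
    have h3 : (fun ω => max (g ω + (n:ℝ)) b - n)
        = fun ω => φ (max (l (g ω + n)) (l b)) - n := by
      funext ω
      rw [← hl_mono.map_max, hφ_inv _ (le_max_right _ _)]
    rw [h3]
    exact h2
  apply aemeasurable_of_tendsto_metrizable_ae Filter.atTop hT
  refine Filter.Eventually.of_forall fun ω => ?_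
  refine Filter.Tendsto.congr' ?_ tendsto_const_nhds
  filter_upwards [Filter.eventually_ge_atTop ⌈b - g ω⌉₊] with n hn
  have h1 : b - g ω ≤ (n : ℝ) := le_trans (Nat.le_ceil _) (Nat.cast_le.mpr hn)
  rw [max_eq_left (by linarith)]
  ring

/-- If in addition `l` is convex, the acceptance set
`𝒜_{l,λ} = { X ∈ 𝒳_l : SR_{l,λ}(X) ≤ 0 }` is convex and `SR_{l,λ}` is convex on `𝒳_l`. -/
theorem SR_convex_risk_measure
    {Ω : Type*} [MeasurableSpace Ω] (P : Measure Ω) [IsProbabilityMeasure P]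
    (l : ℝ → ℝ) (lam : ℝ)
    (hl_nonconst : ∃ x y : ℝ, l x ≠ l y)
    (hl_mono : Monotone l)
    (hl_cont : Continuous l)
    (hl_convex : ConvexOn ℝ Set.univ l)
    (hbracket : ∀ X : Ω → ℝ, (∀ t : ℝ, Integrable (fun ω => l (-X ω - t)) P) →
      ∃ tu tl : ℝ, (∫ ω, l (-X ω - tu) ∂P) - lam ≤ 0 ∧
        0 < (∫ ω, l (-X ω - tl) ∂P) - lam) :
    (∀ X₁ X₂ : Ω → ℝ,
      (∀ t : ℝ, Integrable (fun ω => l (-X₁ ω - t)) P) →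
      (∀ t : ℝ, Integrable (fun ω => l (-X₂ ω - t)) P) →
      SR P l lam X₁ ≤ 0 → SR P l lam X₂ ≤ 0 →
      ∀ α : ℝ, α ∈ Set.Icc (0 : ℝ) 1 →
        SR P l lam (fun ω => α * X₁ ω + (1 - α) * X₂ ω) ≤ 0) ∧
    (∀ X₁ X₂ : Ω → ℝ,
      (∀ t : ℝ, Integrable (fun ω => l (-X₁ ω - t)) P) →
      (∀ t : ℝ, Integrable (fun ω => l (-X₂ ω - t)) P) →
      ∀ α : ℝ, α ∈ Set.Icc (0 : ℝ) 1 →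
        SR P l lam (fun ω => α * X₁ ω + (1 - α) * X₂ ω) ≤
          α * SR P l lam X₁ + (1 - α) * SR P l lam X₂) := by
  obtain ⟨b, hsm, hbdd⟩ := l_facts hl_nonconst hl_mono hl_convex
  -- a.e. measurability of -X from integrability of the family
  have hmeas : ∀ X : Ω → ℝ, (∀ t : ℝ, Integrable (fun ω => l (-X ω - t)) P) →
      AEMeasurable (fun ω => -X ω) P := by
    intro X hX
    exact aemeas_of_comp P hl_mono hsm hbdd (fun t => (hX t).aestronglyMeasurable)
  -- monotonicity of the integral in t
  have hmono_int : ∀ X : Ω → ℝ, (∀ t : ℝ, Integrable (fun ω => l (-X ω - t)) P) →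
      ∀ s t : ℝ, s ≤ t → (∫ ω, l (-X ω - t) ∂P) ≤ ∫ ω, l (-X ω - s) ∂P := by
    intro X hX s t hst
    exact integral_mono (hX t) (hX s) (fun ω => hl_mono (by linarith))
  -- the acceptance-time set is nonempty and bounded below
  have hS : ∀ X : Ω → ℝ, (∀ t : ℝ, Integrable (fun ω => l (-X ω - t)) P) →
      {t : ℝ | (∫ ω, l (-X ω - t) ∂P) ≤ lam}.Nonempty ∧
      BddBelow {t : ℝ | (∫ ω, l (-X ω - t) ∂P) ≤ lam} := by
    intro X hX
    obtain ⟨tu, tl, htu, htl⟩ := hbracket X hX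
    refine ⟨⟨tu, by simp only [Set.mem_setOf_eq]; linarith⟩, ⟨tl, ?_⟩⟩
    intro s hs
    by_contra hlt
    push_neg at hlt
    have := hmono_int X hX s tl hlt.le
    simp only [Set.mem_setOf_eq] at hs
    linarith
  have main : ∀ X₁ X₂ : Ω → ℝ,
      (∀ t : ℝ, Integrable (fun ω => l (-X₁ ω - t)) P) →
      (∀ t : ℝ, Integrable (fun ω => l (-X₂ ω - t)) P) →
      ∀ α : ℝ, α ∈ Set.Icc (0 : ℝ) 1 →
        SR P l lam (fun ω => α * X₁ ω + (1 - α) * X₂ ω) ≤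
          α * SR P l lam X₁ + (1 - α) * SR P l lam X₂ := by
    intro X₁ X₂ hX₁ hX₂ α hα
    obtain ⟨hα0, hα1⟩ := hα
    set Xc : Ω → ℝ := fun ω => α * X₁ ω + (1 - α) * X₂ ω with hXc_def
    -- convexity pointwise bound
    have hconv : ∀ s₁ s₂ : ℝ, ∀ ω : Ω,
        l (-Xc ω - (α * s₁ + (1 - α) * s₂)) ≤
          α * l (-X₁ ω - s₁) + (1 - α) * l (-X₂ ω - s₂) := by
      intro s₁ s₂ ω
      have harg : -Xc ω - (α * s₁ + (1 - α) * s₂)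
          = α * (-X₁ ω - s₁) + (1 - α) * (-X₂ ω - s₂) := by
        simp only [hXc_def]; ring
      rw [harg]
      have h0 : (0:ℝ) ≤ 1 - α := by linarith
      have h1 : α + (1 - α) = 1 := by ring
      have := hl_convex.2 (Set.mem_univ (-X₁ ω - s₁)) (Set.mem_univ (-X₂ ω - s₂))
        hα0 h0 h1
      simpa [smul_eq_mul] using this
    -- lower bound
    have hlow : ∀ t : ℝ, ∀ ω : Ω,
        min (l (-X₁ ω - t)) (l (-X₂ ω - t)) ≤ l (-Xc ω - t) := by
      intro t ω
      rw [← hl_mono.map_min]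
      apply hl_mono
      rcases le_total (-X₁ ω - t) (-X₂ ω - t) with h | h
      · rw [min_eq_left h]
        simp only [hXc_def]
        nlinarith
      · rw [min_eq_right h]
        simp only [hXc_def]
        nlinarith
    -- integrability of the combination
    have hXc_int : ∀ t : ℝ, Integrable (fun ω => l (-Xc ω - t)) P := by
      intro t
      have hm : AEMeasurable (fun ω => -Xc ω - t) P := by
        have h1 : AEMeasurable (fun ω => α * (-X₁ ω) + (1 - α) * (-X₂ ω) - t) P :=
          (((hmeas X₁ hX₁).const_mul α).add ((hmeas X₂ hX₂).const_mul (1 - α))).sub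
            aemeasurable_const
        have h2 : (fun ω => -Xc ω - t) = fun ω => α * (-X₁ ω) + (1 - α) * (-X₂ ω) - t := by
          funext ω; simp only [hXc_def]; ring
        rw [h2]; exact h1
      have hASM : AEStronglyMeasurable (fun ω => l (-Xc ω - t)) P :=
        ((hl_cont.measurable).comp_aemeasurable hm).aestronglyMeasurable
      have hb_int : Integrable (fun ω => |l (-X₁ ω - t)| + |l (-X₂ ω - t)|) P :=
        ((hX₁ t).abs).add ((hX₂ t).abs)
      refine Integrable.mono' hb_int hASM ?_
      refine Filter.Eventually.of_forall fun ω => ?_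
      rw [Real.norm_eq_abs, abs_le]
      constructor
      · have h1 := hlow t ω
        have h2 : -(|l (-X₁ ω - t)| + |l (-X₂ ω - t)|) ≤
            min (l (-X₁ ω - t)) (l (-X₂ ω - t)) := by
          rcases le_total (l (-X₁ ω - t)) (l (-X₂ ω - t)) with h | h
          · rw [min_eq_left h]
            have ha := neg_abs_le (l (-X₁ ω - t))
            have hb := abs_nonneg (l (-X₂ ω - t))
            linarith
          · rw [min_eq_right h]
            have ha := neg_abs_le (l (-X₂ ω - t))
            have hb := abs_nonneg (l (-X₁ ω - t))
            linarith
        linarith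
      · have h1 := hconv t t ω
        have h2 : α * t + (1 - α) * t = t := by ring
        rw [h2] at h1
        have h3 := le_abs_self (l (-X₁ ω - t))
        have h4 := le_abs_self (l (-X₂ ω - t))
        have h5 := abs_nonneg (l (-X₁ ω - t))
        have h6 := abs_nonneg (l (-X₂ ω - t))
        nlinarith
    obtain ⟨hne_c, hbb_c⟩ := hS Xc hXc_int
    obtain ⟨hne₁, hbb₁⟩ := hS X₁ hX₁
    obtain ⟨hne₂, hbb₂⟩ := hS X₂ hX₂
    refine le_of_forall_pos_le_add fun ε hε => ?_
    set r₁ := SR P l lam X₁ with hr₁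
    set r₂ := SR P l lam X₂ with hr₂
    -- r₁ + ε and r₂ + ε are acceptable
    have hmem : ∀ (X : Ω → ℝ) (hX : ∀ t : ℝ, Integrable (fun ω => l (-X ω - t)) P),
        (∫ ω, l (-X ω - (SR P l lam X + ε)) ∂P) ≤ lam := by
      intro X hX
      have hlt : sInf {t : ℝ | (∫ ω, l (-X ω - t) ∂P) ≤ lam} < SR P l lam X + ε := by
        show SR P l lam X < SR P l lam X + ε
        linarith
      obtain ⟨s, hs, hslt⟩ := exists_lt_of_csInf_lt (hS X hX).1 hlt
      simp only [Set.mem_setOf_eq] at hs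
      exact le_trans (hmono_int X hX s _ hslt.le) hs
    have ht_mem : (∫ ω, l (-Xc ω - (α * (r₁ + ε) + (1 - α) * (r₂ + ε))) ∂P) ≤ lam := by
      have hint : (∫ ω, l (-Xc ω - (α * (r₁ + ε) + (1 - α) * (r₂ + ε))) ∂P) ≤
          ∫ ω, (α * l (-X₁ ω - (r₁ + ε)) + (1 - α) * l (-X₂ ω - (r₂ + ε))) ∂P := by
        refine integral_mono (hXc_int _) ?_ (fun ω => hconv (r₁ + ε) (r₂ + ε) ω)
        exact ((hX₁ _).const_mul α).add ((hX₂ _).const_mul (1 - α))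
      rw [integral_add ((hX₁ _).const_mul α) ((hX₂ _).const_mul (1 - α)),
        integral_const_mul, integral_const_mul] at hint
      have h1 := hmem X₁ hX₁
      have h2 := hmem X₂ hX₂
      have h3 := mul_le_mul_of_nonneg_left h1 hα0
      have h4 := mul_le_mul_of_nonneg_left h2 (by linarith : (0:ℝ) ≤ 1 - α)
      calc (∫ ω, l (-Xc ω - (α * (r₁ + ε) + (1 - α) * (r₂ + ε))) ∂P)
          ≤ α * (∫ ω, l (-X₁ ω - (r₁ + ε)) ∂P) + (1 - α) * (∫ ω, l (-X₂ ω - (r₂ + ε)) ∂P) := hint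
        _ ≤ α * lam + (1 - α) * lam := by linarith
        _ = lam := by ring
    have hfinal : SR P l lam Xc ≤ α * (r₁ + ε) + (1 - α) * (r₂ + ε) :=
      csInf_le hbb_c ht_mem
    calc SR P l lam Xc ≤ α * (r₁ + ε) + (1 - α) * (r₂ + ε) := hfinal
      _ = α * r₁ + (1 - α) * r₂ + ε := by ring
  refine ⟨?_, main⟩
  intro X₁ X₂ hX₁ hX₂ h1 h2 α hα
  have := main X₁ X₂ hX₁ hX₂ α hα
  have hα0 := hα.1
  have hα1 := hα.2
  nlinarith
end

section
/- Let u be a utility function as in the context and let X ∈ 𝒳̄_u. Suppose there exist t_u, t_l ∈ ℝ such that G'_X(t_u) ≤ 0 < G'_X(t_l), where G'_X(t) = 1 − E[u'(−X−t)]. Then: (i) the map G_X(t) = t + E[u(−X−t)] is convex and differentiable on ℝ with derivative G'_X(t) = 1 − E[u'(−X−t)]; (ii) SR_{u',1}(X) is a root of G'_X as well as a minimizer of G_X over ℝ; and (iii) OCE_u(X) = SR_{u',1}(X) + E[u(−X − SR_{u',1}(X))]. -/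
open MeasureTheory Filter Topology

/-- For a utility function `u` and `X ∈ 𝒳̄_u` satisfying the bracketing
condition for `G'_X(t) = 1 - E[u'(-X-t)]`: the map `G_X(t) = t + E[u(-X-t)]` is convex
and differentiable with derivative `G'_X`; `SR_{u',1}(X)` is a root of `G'_X` and a
minimizer of `G_X`; and `OCE_u(X) = SR_{u',1}(X) + E[u(-X - SR_{u',1}(X))]`. -/
theorem oce_sr_characterization
    {Ω : Type*} [MeasurableSpace Ω] (P : Measure Ω) [IsProbabilityMeasure P]
    (u u' : ℝ → ℝ)
    (hu_convex : ConvexOn ℝ Set.univ u)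
    (hu_mono : Monotone u)
    (hu_deriv : ∀ x : ℝ, HasDerivAt u (u' x) x)
    (hu'_cont : Continuous u')
    (hu'_range : (1 : ℝ) ∈ interior (Set.range u'))
    (X : Ω → ℝ)
    (hXu : ∀ t : ℝ, Integrable (fun ω => u (-X ω - t)) P)
    (hXu' : ∀ t : ℝ, Integrable (fun ω => u' (-X ω - t)) P)
    (tu tl : ℝ)
    (htu : 1 - (∫ ω, u' (-X ω - tu) ∂P) ≤ 0)
    (htl : 0 < 1 - (∫ ω, u' (-X ω - tl) ∂P)) :
    ConvexOn ℝ Set.univ (fun t : ℝ => t + ∫ ω, u (-X ω - t) ∂P) ∧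
    (∀ t : ℝ, HasDerivAt (fun s : ℝ => s + ∫ ω, u (-X ω - s) ∂P)
      (1 - ∫ ω, u' (-X ω - t) ∂P) t) ∧
    1 - (∫ ω, u' (-X ω - SR P u' 1 X) ∂P) = 0 ∧
    (∀ t : ℝ, SR P u' 1 X + (∫ ω, u (-X ω - SR P u' 1 X) ∂P) ≤
      t + ∫ ω, u (-X ω - t) ∂P) ∧
    (⨅ t : ℝ, (t + ∫ ω, u (-X ω - t) ∂P)) =
      SR P u' 1 X + ∫ ω, u (-X ω - SR P u' 1 X) ∂P := by
  -- Notation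
  set F : ℝ → ℝ := fun t => ∫ ω, u' (-X ω - t) ∂P with hFdef
  set G : ℝ → ℝ := fun t => t + ∫ ω, u (-X ω - t) ∂P with hGdef
  -- u' is monotone
  have hu'_mono : Monotone u' := by
    intro a b hab
    rcases eq_or_lt_of_le hab with rfl | hab'
    · exact le_rfl
    have h := hu_convex.monotoneOn_deriv
      (fun x _ => (hu_deriv x).differentiableAt) (Set.mem_univ a) (Set.mem_univ b) hab
    rwa [(hu_deriv a).deriv, (hu_deriv b).deriv] at h
  -- u' is nonnegative
  have hu'_nonneg : ∀ x, 0 ≤ u' x := by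
    intro x
    have h := hu_convex.slope_le_deriv (Set.mem_univ (x - 1)) (Set.mem_univ x)
      (by linarith) (hu_deriv x).differentiableAt
    rw [(hu_deriv x).deriv] at h
    have hs : (0 : ℝ) ≤ slope u (x - 1) x := by
      rw [slope_def_field]
      apply div_nonneg
      · exact sub_nonneg.2 (hu_mono (by linarith))
      · linarith
    linarith
  -- F is antitone
  have hF_anti : Antitone F := by
    intro s t hst
    exact integral_mono (hXu' t) (hXu' s) fun ω => hu'_mono (by linarith)
  -- differentiation under the integral sign
  have hG_deriv : ∀ t : ℝ, HasDerivAt (fun s : ℝ => ∫ ω, u (-X ω - s) ∂P)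
      (∫ ω, -u' (-X ω - t) ∂P) t := by
    intro t0
    have h := hasDerivAt_integral_of_dominated_loc_of_deriv_le
      (F := fun t ω => u (-X ω - t)) (F' := fun t ω => -u' (-X ω - t))
      (bound := fun ω => u' (-X ω - (t0 - 1))) (μ := P) (x₀ := t0)
      (Metric.ball_mem_nhds t0 one_pos)
      (Filter.Eventually.of_forall fun t => (hXu t).1)
      (hXu t0)
      ((hXu' t0).1.neg)
      ?_ (hXu' (t0 - 1)) ?_
    · exact h.2
    · refine Filter.Eventually.of_forall fun ω t ht => ?_
      rw [Metric.mem_ball, Real.dist_eq] at ht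
      have h1 := abs_sub_lt_iff.mp ht
      rw [norm_neg, Real.norm_eq_abs, abs_of_nonneg (hu'_nonneg _)]
      exact hu'_mono (by linarith [h1.1, h1.2])
    · refine Filter.Eventually.of_forall fun ω t _ => ?_
      have h1 : HasDerivAt (fun s : ℝ => -X ω - s) (-1) t := by
        exact (hasDerivAt_id' t).const_sub (-X ω)
      have h2 := (hu_deriv (-X ω - t)).comp t h1
      rw [mul_neg_one] at h2; exact h2
  -- derivative of G
  have hG_deriv' : ∀ t : ℝ, HasDerivAt G (1 - F t) t := by
    intro t
    have h := (hasDerivAt_id t).add (hG_deriv t)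
    have hne : (∫ ω, -u' (-X ω - t) ∂P) = -F t := by
      simpa [hFdef] using integral_neg (μ := P) (fun ω => u' (-X ω - t))
    rw [hne] at h
    rw [sub_eq_add_neg]; exact h
  have hG_diff : Differentiable ℝ G := fun t => (hG_deriv' t).differentiableAt
  -- convexity of G
  have hG_convex : ConvexOn ℝ Set.univ G := by
    have hmono : Monotone (deriv G) := by
      intro a b hab
      rw [(hG_deriv' a).deriv, (hG_deriv' b).deriv]
      have := hF_anti hab
      linarith
    exact hmono.convexOn_univ_of_deriv hG_diff
  -- continuity of F
  have hF_cont : Continuous F := by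
    rw [continuous_iff_continuousAt]
    intro t0
    apply continuousAt_of_dominated (bound := fun ω => u' (-X ω - (t0 - 1)))
    · exact Filter.Eventually.of_forall fun t => (hXu' t).1
    · filter_upwards [Metric.ball_mem_nhds t0 one_pos] with t ht
      refine Filter.Eventually.of_forall fun ω => ?_
      rw [Metric.mem_ball, Real.dist_eq] at ht
      have h1 := abs_sub_lt_iff.mp ht
      rw [Real.norm_eq_abs, abs_of_nonneg (hu'_nonneg _)]
      exact hu'_mono (by linarith [h1.1, h1.2])
    · exact hXu' (t0 - 1)
    · refine Filter.Eventually.of_forall fun ω => ?_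
      exact (hu'_cont.comp (continuous_const.sub continuous_id)).continuousAt
  -- there exists a point where F > 1
  have hbig : ∃ t0 : ℝ, 1 < F t0 := by
    obtain ⟨ε, εpos, hball⟩ := Metric.mem_nhds_iff.mp (mem_interior_iff_mem_nhds.mp hu'_range)
    have hmem : (1 + ε / 2 : ℝ) ∈ Metric.ball (1 : ℝ) ε := by
      rw [Metric.mem_ball, Real.dist_eq]
      rw [abs_of_nonneg (by linarith)]
      linarith
    obtain ⟨y0, hy0⟩ := hball hmem
    set c : ℝ := 1 + ε / 2 with hc
    have hc1 : (1 : ℝ) < c := by rw [hc]; linarith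
    set f : ℕ → Ω → ℝ := fun n ω => min (u' (-X ω - (-(n : ℝ)))) c with hfdef
    have hf_int : ∀ n, Integrable (f n) P := by
      intro n
      have := (hXu' (-(n : ℝ))).inf (integrable_const c)
      simpa [hfdef, Pi.inf_def] using this
    have hlim : Filter.Tendsto (fun n => ∫ ω, f n ω ∂P) Filter.atTop (𝓝 c) := by
      have h := integral_tendsto_of_tendsto_of_monotone (μ := P) (f := f)
        (F := fun _ => c) hf_int (integrable_const c) ?_ ?_
      · simpa using h
      · refine Filter.Eventually.of_forall fun ω => ?_
        intro n m hnm
        refine min_le_min (hu'_mono ?_) le_rfl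
        have : (n : ℝ) ≤ m := Nat.cast_le.mpr hnm
        linarith
      · refine Filter.Eventually.of_forall fun ω => ?_
        apply Filter.Tendsto.congr' _ tendsto_const_nhds
        filter_upwards [Filter.eventually_ge_atTop (Nat.ceil (y0 + X ω))] with n hn
        have h1 : y0 + X ω ≤ (n : ℝ) := le_trans (Nat.le_ceil _) (Nat.cast_le.mpr hn)
        have h2 : y0 ≤ -X ω - (-(n : ℝ)) := by linarith
        have h3 : c ≤ u' (-X ω - (-(n : ℝ))) := by
          rw [← hy0]; exact hu'_mono h2
        exact (min_eq_right h3).symm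
    have hev : ∀ᶠ n in Filter.atTop, (1 : ℝ) < ∫ ω, f n ω ∂P :=
      hlim.eventually (eventually_gt_nhds hc1)
    obtain ⟨N, hN⟩ := hev.exists
    refine ⟨-(N : ℝ), lt_of_lt_of_le hN ?_⟩
    exact integral_mono (hf_int N) (hXu' (-(N : ℝ))) fun ω => min_le_left _ _
  obtain ⟨t0, ht0⟩ := hbig
  -- the set defining SR
  set S : Set ℝ := {t : ℝ | F t ≤ 1} with hSdef
  have hSR : SR P u' 1 X = sInf S := rfl
  have hS_ne : S.Nonempty := ⟨tl, by simp only [hSdef, Set.mem_setOf_eq]; linarith⟩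
  have hS_bdd : BddBelow S := by
    refine ⟨t0, fun s hs => ?_⟩
    by_contra h
    push_neg at h
    have := hF_anti h.le
    simp only [hSdef, Set.mem_setOf_eq] at hs
    linarith
  set ts : ℝ := sInf S with hts
  -- F ts = 1
  have hFts_le : F ts ≤ 1 := by
    have key : ∀ δ : ℝ, 0 < δ → F (ts + δ) ≤ 1 := by
      intro δ hδ
      obtain ⟨s, hsS, hs⟩ := (csInf_lt_iff hS_bdd hS_ne).mp
        (show sInf S < ts + δ by rw [← hts]; linarith)
      exact le_trans (hF_anti hs.le) hsS
    have htend : Filter.Tendsto (fun n : ℕ => F (ts + 1 / (n + 1))) Filter.atTop (𝓝 (F ts)) := by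
      have h1 : Filter.Tendsto (fun n : ℕ => ts + 1 / ((n : ℝ) + 1)) Filter.atTop (𝓝 ts) := by
        have := tendsto_one_div_add_atTop_nhds_zero_nat (𝕜 := ℝ)
        have h2 := this.const_add ts
        simpa using h2
      exact (hF_cont.continuousAt.tendsto.comp h1)
    refine le_of_tendsto htend (Filter.Eventually.of_forall fun n => key _ ?_)
    positivity
  have hFts_ge : 1 ≤ F ts := by
    have key : ∀ δ : ℝ, 0 < δ → 1 ≤ F (ts - δ) := by
      intro δ hδ
      by_contra h
      push_neg at h
      have hmem : ts - δ ∈ S := by simp only [hSdef, Set.mem_setOf_eq]; linarith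
      have := csInf_le hS_bdd hmem
      rw [← hts] at this
      linarith
    have htend : Filter.Tendsto (fun n : ℕ => F (ts - 1 / (n + 1))) Filter.atTop (𝓝 (F ts)) := by
      have h1 : Filter.Tendsto (fun n : ℕ => ts - 1 / ((n : ℝ) + 1)) Filter.atTop (𝓝 ts) := by
        have h2 := tendsto_one_div_add_atTop_nhds_zero_nat.const_sub ts
        simpa using h2
      exact (hF_cont.continuousAt.tendsto.comp h1)
    refine ge_of_tendsto htend (Filter.Eventually.of_forall fun n => key _ ?_)
    positivity
  have hFts : F ts = 1 := le_antisymm hFts_le hFts_ge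
  -- ts minimizes G
  have hmin : ∀ t : ℝ, G ts ≤ G t := by
    intro t
    rcases lt_trichotomy t ts with h | h | h
    · -- t < ts : MVT on [t, ts]
      obtain ⟨c, hc, hceq⟩ := exists_hasDerivAt_eq_slope G (fun s => 1 - F s) h
        (hG_diff.continuous.continuousOn) (fun x _ => hG_deriv' x)
      have hFc : 1 ≤ F c := by
        have := hF_anti hc.2.le
        rw [hFts] at this
        exact this
      have hpos : (0 : ℝ) < ts - t := by linarith
      have heq := (eq_div_iff hpos.ne').mp hceq
      nlinarith
    · rw [h]
    · -- ts < t : MVT on [ts, t]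
      obtain ⟨c, hc, hceq⟩ := exists_hasDerivAt_eq_slope G (fun s => 1 - F s) h
        (hG_diff.continuous.continuousOn) (fun x _ => hG_deriv' x)
      have hFc : F c ≤ 1 := by
        have := hF_anti hc.1.le
        rw [hFts] at this
        exact this
      have hpos : (0 : ℝ) < t - ts := by linarith
      have heq := (eq_div_iff hpos.ne').mp hceq
      nlinarith
  refine ⟨hG_convex, hG_deriv', ?_, ?_, ?_⟩
  · show 1 - F (SR P u' 1 X) = 0
    rw [hSR, hFts]; ring
  · intro t
    exact hmin t
  · refine le_antisymm ?_ ?_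
    · exact ciInf_le ⟨G ts, by rintro y ⟨t, rfl⟩; exact hmin t⟩ ts
    · exact le_ciInf hmin
end

section
/- Let u be a utility function as in the context and let X ∈ 𝒳̄_u be such that there exist t_u, t_l ∈ ℝ with G'_X(t_u) ≤ 0 < G'_X(t_l), where G'_X(t) = 1 − E[u'(−X−t)]. Let Z₁, …, Z_m be i.i.d. with the law of X, set SR_m(Z) = inf{ t : (1/m)∑_{j=1}^m u'(−Z_j − t) ≤ 1 } and OCE_m(Z) = SR_m(Z) + (1/m)∑_{j=1}^m u(−Z_j − SR_m(Z)). Let δ, ε > 0 and let t̂ be a random variable satisfying, almost surely, |t̂ − SR_m(Z)| ≤ δ and |(1/m)∑_{j=1}^m u'(−Z_j − t̂) − 1| ≤ ε, and set ŝ = t̂ + (1/m)∑_{j=1}^m u(−Z_j − t̂). Then E[|ŝ − OCE_u(X)|] ≤ δε + E[|OCE_m(Z) − OCE_u(X)|] and E[(ŝ − OCE_u(X))²] ≤ 2δ²ε² + 2E[(OCE_m(Z) − OCE_u(X))²]. -/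
open MeasureTheory ProbabilityTheory

/-- The optimized certainty equivalent `OCE_u(X) = inf_{t ∈ ℝ} { t + E[u(-X-t)] }`. -/
noncomputable def OCE {Ω : Type*} [MeasurableSpace Ω] (P : Measure Ω)
    (u : ℝ → ℝ) (X : Ω → ℝ) : ℝ :=
  ⨅ t : ℝ, (t + ∫ ω, u (-X ω - t) ∂P)

/-- The SAA estimator `SR_m(Z)(ω) = inf { t : (1/m) ∑ u'(-Z_j(ω)-t) ≤ 1 }`. -/
noncomputable def SRm {Ω : Type*} (m : ℕ) (u' : ℝ → ℝ) (Z : Fin m → Ω → ℝ) (ω : Ω) : ℝ :=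
  sInf {t : ℝ | (1 / (m : ℝ)) * ∑ j : Fin m, u' (-Z j ω - t) ≤ 1}

/-- The SAA estimator `OCE_m(Z)(ω) = SR_m(Z)(ω) + (1/m) ∑ u(-Z_j(ω) - SR_m(Z)(ω))`. -/
noncomputable def OCEm {Ω : Type*} (m : ℕ) (u u' : ℝ → ℝ) (Z : Fin m → Ω → ℝ) (ω : Ω) : ℝ :=
  SRm m u' Z ω + (1 / (m : ℝ)) * ∑ j : Fin m, u (-Z j ω - SRm m u' Z ω)


private lemma oce_basic (u' : ℝ → ℝ) (hu'_cont : Continuous u') (hu'_mono : Monotone u')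
    (x0 x1 : ℝ) (hx0 : u' x0 < 1) (hx1 : 1 < u' x1)
    (m : ℕ) (hm : 0 < m) (z : Fin m → ℝ) :
    (∀ t : ℝ, (1/(m:ℝ)) * ∑ j : Fin m, u' (-z j - t) ≤ 1 ↔
      sInf {t : ℝ | (1/(m:ℝ)) * ∑ j : Fin m, u' (-z j - t) ≤ 1} ≤ t) ∧
    (1/(m:ℝ)) * ∑ j : Fin m, u'
      (-z j - sInf {t : ℝ | (1/(m:ℝ)) * ∑ j : Fin m, u' (-z j - t) ≤ 1}) = 1 := by
  have hmpos : (0:ℝ) < (m:ℝ) := by exact_mod_cast hm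
  set a : ℝ → ℝ := fun t => (1/(m:ℝ)) * ∑ j : Fin m, u' (-z j - t) with ha_def
  set S : Set ℝ := {t : ℝ | a t ≤ 1} with hS_def
  have ha_anti : Antitone a := by
    intro s t hst
    apply mul_le_mul_of_nonneg_left _ (by positivity)
    exact Finset.sum_le_sum fun j _ => hu'_mono (by linarith)
  have ha_cont : Continuous a :=
    continuous_const.mul (continuous_finset_sum _ fun j _ =>
      hu'_cont.comp (continuous_const.sub continuous_id))
  have j0 : Fin m := ⟨0, hm⟩
  have hne : (Finset.univ : Finset (Fin m)).Nonempty := ⟨j0, Finset.mem_univ _⟩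
  have havg : ∀ (c : ℝ), (1/(m:ℝ)) * ∑ _j : Fin m, c = c := by
    intro c
    rw [Finset.sum_const, Finset.card_univ, Fintype.card_fin, nsmul_eq_mul]
    field_simp
  have hS_ne : S.Nonempty := by
    refine ⟨Finset.univ.sup' hne (fun j => -z j - x0), ?_⟩
    have : a (Finset.univ.sup' hne (fun j => -z j - x0)) ≤ u' x0 := by
      rw [ha_def]
      calc (1/(m:ℝ)) * ∑ j : Fin m, u' (-z j - Finset.univ.sup' hne (fun j => -z j - x0))
          ≤ (1/(m:ℝ)) * ∑ _j : Fin m, u' x0 := by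
            apply mul_le_mul_of_nonneg_left _ (by positivity)
            refine Finset.sum_le_sum fun j _ => hu'_mono ?_
            have := Finset.le_sup' (fun j => -z j - x0) (Finset.mem_univ j)
            linarith
        _ = u' x0 := havg _
    exact le_trans this hx0.le
  have hS_bdd : BddBelow S := by
    refine ⟨Finset.univ.inf' hne (fun j => -z j - x1), fun t ht => ?_⟩
    by_contra hlt
    push_neg at hlt
    have : u' x1 ≤ a t := by
      rw [ha_def]
      calc u' x1 = (1/(m:ℝ)) * ∑ _j : Fin m, u' x1 := (havg _).symm
        _ ≤ (1/(m:ℝ)) * ∑ j : Fin m, u' (-z j - t) := by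
            apply mul_le_mul_of_nonneg_left _ (by positivity)
            refine Finset.sum_le_sum fun j _ => hu'_mono ?_
            have := Finset.inf'_le (fun j => -z j - x1) (Finset.mem_univ j)
            linarith
    have : (1:ℝ) < a t := lt_of_lt_of_le hx1 this
    have ht' : a t ≤ 1 := ht
    linarith
  have hS_closed : IsClosed S := isClosed_le ha_cont continuous_const
  have hmem : sInf S ∈ S := hS_closed.csInf_mem hS_ne hS_bdd
  have hge : (1:ℝ) ≤ a (sInf S) := by
    by_contra hlt
    push_neg at hlt
    have hopen : IsOpen {t : ℝ | a t < 1} := isOpen_lt ha_cont continuous_const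
    obtain ⟨r, hr, hball⟩ := Metric.isOpen_iff.mp hopen (sInf S) hlt
    have hmemball : sInf S - r/2 ∈ Metric.ball (sInf S) r := by
      simp only [Metric.mem_ball, Real.dist_eq]
      rw [show sInf S - r/2 - sInf S = -(r/2) by ring, abs_neg, abs_of_pos (by linarith)]
      linarith
    have h3 : a (sInf S - r/2) < 1 := hball hmemball
    have : sInf S - r/2 ∈ S := le_of_lt h3
    have := csInf_le hS_bdd this
    linarith
  have heq : a (sInf S) = 1 := le_antisymm hmem hge
  refine ⟨fun t => ⟨fun h => csInf_le hS_bdd h, fun h => ?_⟩, heq⟩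
  calc a t ≤ a (sInf S) := ha_anti h
    _ = 1 := heq

private lemma oce_key_bound (u u' : ℝ → ℝ)
    (hu_deriv : ∀ x : ℝ, HasDerivAt u (u' x) x)
    (hu'_cont : Continuous u') (hu'_mono : Monotone u')
    (x0 x1 : ℝ) (hx0 : u' x0 < 1) (hx1 : 1 < u' x1)
    (m : ℕ) (hm : 0 < m) (z : Fin m → ℝ)
    (δ ε th : ℝ) (hδ : 0 ≤ δ) (hε : 0 ≤ ε)
    (h1 : |th - sInf {t : ℝ | (1/(m:ℝ)) * ∑ j : Fin m, u' (-z j - t) ≤ 1}| ≤ δ)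
    (h2 : |(1/(m:ℝ)) * ∑ j : Fin m, u' (-z j - th) - 1| ≤ ε) :
    |th + (1/(m:ℝ)) * ∑ j : Fin m, u (-z j - th) -
      (sInf {t : ℝ | (1/(m:ℝ)) * ∑ j : Fin m, u' (-z j - t) ≤ 1} +
       (1/(m:ℝ)) * ∑ j : Fin m,
         u (-z j - sInf {t : ℝ | (1/(m:ℝ)) * ∑ j : Fin m, u' (-z j - t) ≤ 1}))| ≤ δ * ε := by
  obtain ⟨hiff, heq⟩ := oce_basic u' hu'_cont hu'_mono x0 x1 hx0 hx1 m hm z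
  set a : ℝ → ℝ := fun t => (1/(m:ℝ)) * ∑ j : Fin m, u' (-z j - t) with ha_def
  set s : ℝ := sInf {t : ℝ | (1/(m:ℝ)) * ∑ j : Fin m, u' (-z j - t) ≤ 1} with hs_def
  have ha_anti : Antitone a := by
    intro p q hpq
    apply mul_le_mul_of_nonneg_left _ (by positivity)
    exact Finset.sum_le_sum fun j _ => hu'_mono (by linarith)
  set g : ℝ → ℝ := fun t => t + (1/(m:ℝ)) * ∑ j : Fin m, u (-z j - t) with hg_def
  have hg_deriv : ∀ t : ℝ, HasDerivAt g (1 - a t) t := by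
    intro t
    have hsum : HasDerivAt (fun t => ∑ j : Fin m, u (-z j - t))
        (∑ j : Fin m, (u' (-z j - t) * (-1))) t := by
      apply HasDerivAt.fun_sum
      intro j _
      exact (hu_deriv (-z j - t)).comp t ((hasDerivAt_id t).const_sub (-z j))
    have := (hasDerivAt_id t).add (hsum.const_mul ((1:ℝ)/(m:ℝ)))
    convert this using 1
    · rfl
    · rfl
    · rfl
    simp only [ha_def, mul_neg_one, Finset.sum_neg_distrib, mul_neg]
    ring_nf
    exact congrArg (fun S => 1 - ((m:ℝ))⁻¹ * S) (Finset.sum_congr rfl fun x _ => by ring_nf)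
  have hgc : Continuous g := by
    rw [continuous_iff_continuousAt]
    exact fun t => (hg_deriv t).continuousAt
  have has : a s = 1 := heq
  have key : 0 ≤ g th - g s ∧ g th - g s ≤ δ * ε := by
    rcases lt_trichotomy th s with hlt | heqc | hgt
    · obtain ⟨c, hc, hslope⟩ := exists_hasDerivAt_eq_slope g (fun t => 1 - a t) hlt
        hgc.continuousOn (fun x _ => hg_deriv x)
      have hne : s - th ≠ 0 := sub_ne_zero.mpr hlt.ne'
      have hgs : g s - g th = (1 - a c) * (s - th) := by
        rw [hslope, div_mul_cancel₀ _ hne]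
      have hac1 : a s ≤ a c := ha_anti hc.2.le
      have hac2 : a c ≤ a th := ha_anti hc.1.le
      have hb1 : 1 - a c ≤ 0 := by linarith
      have hb2 : -ε ≤ 1 - a c := by
        have h2' : |a th - 1| ≤ ε := h2
        linarith [(abs_le.mp h2').2]
      have hd : s - th ≤ δ := by
        have := abs_le.mp h1
        linarith [this.1]
      constructor
      · nlinarith
      · nlinarith [sub_nonneg.mpr hlt.le]
    · rw [heqc]; exact ⟨by linarith, by nlinarith⟩
    · obtain ⟨c, hc, hslope⟩ := exists_hasDerivAt_eq_slope g (fun t => 1 - a t) hgt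
        hgc.continuousOn (fun x _ => hg_deriv x)
      have hne : th - s ≠ 0 := sub_ne_zero.mpr hgt.ne'
      have hgs : g th - g s = (1 - a c) * (th - s) := by
        rw [hslope, div_mul_cancel₀ _ hne]
      have hac1 : a c ≤ a s := ha_anti hc.1.le
      have hac2 : a th ≤ a c := ha_anti hc.2.le
      have hb1 : 0 ≤ 1 - a c := by linarith
      have hb2 : 1 - a c ≤ ε := by
        have h2' : |a th - 1| ≤ ε := h2
        linarith [(abs_le.mp h2').1]
      have hd : th - s ≤ δ := by
        have := abs_le.mp h1
        linarith [this.2]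
      constructor
      · nlinarith [sub_nonneg.mpr hgt.le]
      · nlinarith [sub_nonneg.mpr hgt.le]
  have : |g th - g s| ≤ δ * ε := abs_le.mpr ⟨by linarith [key.1], key.2⟩
  simpa [hg_def] using this

private lemma SRm_measurable {Ω : Type*} [MeasurableSpace Ω]
    (u' : ℝ → ℝ) (hu'_cont : Continuous u') (hu'_mono : Monotone u')
    (x0 x1 : ℝ) (hx0 : u' x0 < 1) (hx1 : 1 < u' x1)
    (m : ℕ) (hm : 0 < m) (Z : Fin m → Ω → ℝ) (hZmeas : ∀ j, Measurable (Z j)) :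
    Measurable (SRm m u' Z) := by
  apply measurable_of_Iic
  intro c
  have hset : SRm m u' Z ⁻¹' Set.Iic c =
      ⋂ (q : ℚ), ⋂ (_ : c < (q:ℝ)), {ω | (1/(m:ℝ)) * ∑ j : Fin m, u' (-Z j ω - (q:ℝ)) ≤ 1} := by
    ext ω
    obtain ⟨hiff, -⟩ := oce_basic u' hu'_cont hu'_mono x0 x1 hx0 hx1 m hm (fun j => Z j ω)
    simp only [Set.mem_preimage, Set.mem_Iic, Set.mem_iInter, Set.mem_setOf_eq, SRm]
    constructor
    · intro h q hq
      exact (hiff (q:ℝ)).mpr (le_trans h hq.le)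
    · intro h
      by_contra hc
      push_neg at hc
      obtain ⟨q, hq1, hq2⟩ := exists_rat_btwn hc
      exact absurd ((hiff (q:ℝ)).mp (h q hq1)) (not_le.mpr hq2)
  rw [hset]
  refine MeasurableSet.iInter fun q => MeasurableSet.iInter fun _ => ?_
  refine measurableSet_le ?_ measurable_const
  exact (Finset.measurable_sum _ fun j _ =>
    hu'_cont.measurable.comp ((hZmeas j).neg.sub measurable_const)).const_mul _

private lemma integral_helper {Ω : Type*} [MeasurableSpace Ω] (P : Measure Ω)
    [IsProbabilityMeasure P] (f g : Ω → ℝ) (c k c₂ k₂ : ℝ) (hc : 0 ≤ c) (hk : 0 ≤ k)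
    (hgm : AEStronglyMeasurable g P)
    (hf0 : ∀ᵐ ω ∂P, 0 ≤ f ω) (hg0 : ∀ᵐ ω ∂P, 0 ≤ g ω)
    (hfg : ∀ᵐ ω ∂P, f ω ≤ c + k * g ω)
    (hgf : ∀ᵐ ω ∂P, g ω ≤ c₂ + k₂ * f ω) :
    ∫ ω, f ω ∂P ≤ c + k * ∫ ω, g ω ∂P := by
  by_cases hg : Integrable g P
  · calc ∫ ω, f ω ∂P ≤ ∫ ω, (c + k * g ω) ∂P :=
        integral_mono_of_nonneg hf0 ((integrable_const c).add (hg.const_mul k)) hfg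
      _ = c + k * ∫ ω, g ω ∂P := by
        rw [integral_add (integrable_const c) (hg.const_mul k), integral_const,
          integral_const_mul]
        simp
  · have hf : ¬ Integrable f P := by
      intro hf
      apply hg
      refine ((integrable_const c₂).add (hf.const_mul k₂)).mono' hgm ?_
      filter_upwards [hg0, hgf] with ω h0 h1
      rwa [Real.norm_eq_abs, abs_of_nonneg h0]
    rw [integral_undef hf]
    have h2 : 0 ≤ ∫ ω, g ω ∂P := integral_nonneg_of_ae hg0
    nlinarith

/-- Error bounds for an approximate SAA estimator of the OCE risk computed
to accuracy `(δ, ε)`. -/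
theorem oce_approximate_estimator_bounds
    {Ω : Type*} [MeasurableSpace Ω] (P : Measure Ω) [IsProbabilityMeasure P]
    (u u' : ℝ → ℝ)
    (hu_convex : ConvexOn ℝ Set.univ u)
    (hu_mono : Monotone u)
    (hu_deriv : ∀ x : ℝ, HasDerivAt u (u' x) x)
    (hu'_cont : Continuous u')
    (hu'_range : (1 : ℝ) ∈ interior (Set.range u'))
    (X : Ω → ℝ) (hXmeas : Measurable X)
    (hXu : ∀ t : ℝ, Integrable (fun ω => u (-X ω - t)) P)
    (hXu' : ∀ t : ℝ, Integrable (fun ω => u' (-X ω - t)) P)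
    (tu tl : ℝ)
    (htu : 1 - (∫ ω, u' (-X ω - tu) ∂P) ≤ 0)
    (htl : 0 < 1 - (∫ ω, u' (-X ω - tl) ∂P))
    (m : ℕ) (hm : 0 < m)
    (Z : Fin m → Ω → ℝ) (hZmeas : ∀ j, Measurable (Z j))
    (hZindep : iIndepFun Z P)
    (hZdist : ∀ j, Measure.map (Z j) P = Measure.map X P)
    (δ ε : ℝ) (hδ : 0 < δ) (hε : 0 < ε)
    (that : Ω → ℝ)
    (hthat₁ : ∀ᵐ ω ∂P, |that ω - SRm m u' Z ω| ≤ δ)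
    (hthat₂ : ∀ᵐ ω ∂P,
      |(1 / (m : ℝ)) * ∑ j : Fin m, u' (-Z j ω - that ω) - 1| ≤ ε) :
    (∫ ω, |that ω + (1 / (m : ℝ)) * ∑ j : Fin m, u (-Z j ω - that ω) -
        OCE P u X| ∂P) ≤ δ * ε + ∫ ω, |OCEm m u u' Z ω - OCE P u X| ∂P ∧
    (∫ ω, (that ω + (1 / (m : ℝ)) * ∑ j : Fin m, u (-Z j ω - that ω) -
        OCE P u X) ^ 2 ∂P) ≤
      2 * δ ^ 2 * ε ^ 2 + 2 * ∫ ω, (OCEm m u u' Z ω - OCE P u X) ^ 2 ∂P := by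
  -- basic consequences of the hypotheses on `u`
  have hu'_mono : Monotone u' := by
    intro x y hxy
    have h := hu_convex.monotoneOn_deriv (fun x _ => (hu_deriv x).differentiableAt)
      (Set.mem_univ x) (Set.mem_univ y) hxy
    rwa [(hu_deriv x).deriv, (hu_deriv y).deriv] at h
  have hu_cont : Continuous u := by
    rw [continuous_iff_continuousAt]
    exact fun x => (hu_deriv x).continuousAt
  obtain ⟨x0, hx0⟩ : ∃ x0, u' x0 < 1 := by
    rw [mem_interior_iff_mem_nhds, Metric.mem_nhds_iff] at hu'_range
    obtain ⟨η, hη, hball⟩ := hu'_range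
    obtain ⟨x0, hx0⟩ := hball (show 1 - η/2 ∈ Metric.ball 1 η by
      simp only [Metric.mem_ball, Real.dist_eq]
      rw [show 1 - η/2 - 1 = -(η/2) by ring, abs_neg, abs_of_pos (by linarith)]
      linarith)
    exact ⟨x0, by rw [hx0]; linarith⟩
  obtain ⟨x1, hx1⟩ : ∃ x1, 1 < u' x1 := by
    rw [mem_interior_iff_mem_nhds, Metric.mem_nhds_iff] at hu'_range
    obtain ⟨η, hη, hball⟩ := hu'_range
    obtain ⟨x1, hx1⟩ := hball (show 1 + η/2 ∈ Metric.ball 1 η by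
      simp only [Metric.mem_ball, Real.dist_eq]
      rw [show 1 + η/2 - 1 = η/2 by ring, abs_of_pos (by linarith)]
      linarith)
    exact ⟨x1, by rw [hx1]; linarith⟩
  -- measurability of the estimators
  have hSR_meas : Measurable (SRm m u' Z) :=
    SRm_measurable u' hu'_cont hu'_mono x0 x1 hx0 hx1 m hm Z hZmeas
  have hOCEm_meas : Measurable (OCEm m u u' Z) := by
    unfold OCEm
    refine hSR_meas.add (Measurable.const_mul ?_ _)
    exact Finset.measurable_sum _ fun j _ =>
      hu_cont.measurable.comp ((hZmeas j).neg.sub hSR_meas)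
  -- the key pointwise bound
  have hkey : ∀ᵐ ω ∂P,
      |that ω + (1 / (m : ℝ)) * ∑ j : Fin m, u (-Z j ω - that ω) - OCEm m u u' Z ω| ≤ δ * ε := by
    filter_upwards [hthat₁, hthat₂] with ω h1 h2
    have := oce_key_bound u u' hu_deriv hu'_cont hu'_mono x0 x1 hx0 hx1 m hm
      (fun j => Z j ω) δ ε (that ω) hδ.le hε.le h1 h2
    simpa [OCEm, SRm] using this
  set C : ℝ := OCE P u X with hC
  set sh : Ω → ℝ := fun ω => that ω + (1 / (m : ℝ)) * ∑ j : Fin m, u (-Z j ω - that ω)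
    with hsh
  constructor
  · have h := integral_helper P (fun ω => |sh ω - C|) (fun ω => |OCEm m u u' Z ω - C|)
      (δ * ε) 1 (δ * ε) 1 (by positivity) zero_le_one
      (((hOCEm_meas.sub measurable_const).abs).aestronglyMeasurable)
      (Filter.Eventually.of_forall fun ω => abs_nonneg _)
      (Filter.Eventually.of_forall fun ω => abs_nonneg _)
      ?_ ?_
    · simpa only [hsh, one_mul] using h
    · filter_upwards [hkey] with ω h1
      calc |sh ω - C| ≤ |sh ω - OCEm m u u' Z ω| + |OCEm m u u' Z ω - C| :=
            abs_sub_le _ _ _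
        _ ≤ δ * ε + 1 * |OCEm m u u' Z ω - C| := by linarith
    · filter_upwards [hkey] with ω h1
      have h2 : |OCEm m u u' Z ω - sh ω| ≤ δ * ε := by rwa [abs_sub_comm]
      calc |OCEm m u u' Z ω - C| ≤ |OCEm m u u' Z ω - sh ω| + |sh ω - C| :=
            abs_sub_le _ _ _
        _ ≤ δ * ε + 1 * |sh ω - C| := by linarith
  · have h := integral_helper P (fun ω => (sh ω - C) ^ 2) (fun ω => (OCEm m u u' Z ω - C) ^ 2)
      (2 * δ ^ 2 * ε ^ 2) 2 (2 * δ ^ 2 * ε ^ 2) 2 (by positivity) (by norm_num)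
      (((hOCEm_meas.sub measurable_const).pow_const 2).aestronglyMeasurable)
      (Filter.Eventually.of_forall fun ω => sq_nonneg _)
      (Filter.Eventually.of_forall fun ω => sq_nonneg _)
      ?_ ?_
    · simpa only [hsh] using h
    · filter_upwards [hkey] with ω h1
      have h2 : (sh ω - OCEm m u u' Z ω) ^ 2 ≤ (δ * ε) ^ 2 := by
        rw [← sq_abs]
        exact pow_le_pow_left₀ (abs_nonneg _) h1 2
      nlinarith [sq_nonneg (sh ω - OCEm m u u' Z ω + (OCEm m u u' Z ω - C)),
        sq_nonneg (sh ω - OCEm m u u' Z ω - (OCEm m u u' Z ω - C))]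
    · filter_upwards [hkey] with ω h1
      have h2 : (sh ω - OCEm m u u' Z ω) ^ 2 ≤ (δ * ε) ^ 2 := by
        rw [← sq_abs]
        exact pow_le_pow_left₀ (abs_nonneg _) h1 2
      nlinarith [sq_nonneg (OCEm m u u' Z ω - sh ω + (sh ω - C)),
        sq_nonneg (OCEm m u u' Z ω - sh ω - (sh ω - C))]
end

section
/- Let Θ ⊆ ℝᵈ be convex, let ξ be a real-valued random variable on a probability space (Ω, 𝓕, P), let F : Θ × ℝ → ℝ, and let μ ≥ 0. Suppose for P-almost every ω the map θ ↦ F(θ, ξ(ω)) is μ-strongly concave on Θ, i.e., F(αθ₁ + (1−α)θ₂, ξ(ω)) ≥ αF(θ₁, ξ(ω)) + (1−α)F(θ₂, ξ(ω)) + (μα(1−α)/2)‖θ₁ − θ₂‖₂² for all θ₁, θ₂ ∈ Θ and α ∈ [0,1]. Let 𝒳 be a convex set of real-valued random variables on Ω that contains F(θ, ξ) for every θ ∈ Θ and is closed under adding real constants, and let ρ : 𝒳 → ℝ satisfy: (monotonicity) X₁ ≤ X₂ a.s. implies ρ(X₁) ≥ ρ(X₂) for X₁, X₂ ∈ 𝒳;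 (cash invariance) ρ(X + c) = ρ(X) − c for X ∈ 𝒳 and c ∈ ℝ; (convexity) ρ(αX₁ + (1−α)X₂) ≤ αρ(X₁) + (1−α)ρ(X₂) for X₁, X₂ ∈ 𝒳 and α ∈ [0,1]. Then h(θ) = ρ(F(θ, ξ)) is μ-strongly convex on Θ: h(αθ₁ + (1−α)θ₂) ≤ αh(θ₁) + (1−α)h(θ₂) − (μα(1−α)/2)‖θ₁ − θ₂‖₂² for all θ₁, θ₂ ∈ Θ and α ∈ [0,1]. -/
open MeasureTheory

/-- If `F(·, ξ)` is a.s. `μ`-strongly concave on a convex set `Θ` and `ρ` is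
a convex risk measure (monotone, cash invariant, convex) on a suitable convex family `𝒳`
of random variables containing the `F(θ, ξ)`, then `h(θ) = ρ(F(θ, ξ))` is `μ`-strongly
convex on `Θ`. -/
theorem risk_of_strongly_concave_is_strongly_convex
    {Ω : Type*} [MeasurableSpace Ω] (P : Measure Ω) [IsProbabilityMeasure P]
    {d : ℕ} (Θ : Set (EuclideanSpace ℝ (Fin d))) (hΘ : Convex ℝ Θ)
    (ξ : Ω → ℝ) (F : EuclideanSpace ℝ (Fin d) → ℝ → ℝ) (μ : ℝ) (hμ : 0 ≤ μ)
    (hF_concave : ∀ᵐ ω ∂P, ∀ θ₁ ∈ Θ, ∀ θ₂ ∈ Θ, ∀ α ∈ Set.Icc (0 : ℝ) 1,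
      α * F θ₁ (ξ ω) + (1 - α) * F θ₂ (ξ ω) + μ * α * (1 - α) / 2 * ‖θ₁ - θ₂‖ ^ 2 ≤
        F (α • θ₁ + (1 - α) • θ₂) (ξ ω))
    (𝒳 : Set (Ω → ℝ))
    (h𝒳_convex : ∀ X₁ ∈ 𝒳, ∀ X₂ ∈ 𝒳, ∀ α ∈ Set.Icc (0 : ℝ) 1,
      (fun ω => α * X₁ ω + (1 - α) * X₂ ω) ∈ 𝒳)
    (h𝒳_F : ∀ θ ∈ Θ, (fun ω => F θ (ξ ω)) ∈ 𝒳)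
    (h𝒳_const : ∀ X ∈ 𝒳, ∀ c : ℝ, (fun ω => X ω + c) ∈ 𝒳)
    (ρ : (Ω → ℝ) → ℝ)
    (hρ_mono : ∀ X₁ ∈ 𝒳, ∀ X₂ ∈ 𝒳, (∀ᵐ ω ∂P, X₁ ω ≤ X₂ ω) → ρ X₂ ≤ ρ X₁)
    (hρ_cash : ∀ X ∈ 𝒳, ∀ c : ℝ, ρ (fun ω => X ω + c) = ρ X - c)
    (hρ_convex : ∀ X₁ ∈ 𝒳, ∀ X₂ ∈ 𝒳, ∀ α ∈ Set.Icc (0 : ℝ) 1,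
      ρ (fun ω => α * X₁ ω + (1 - α) * X₂ ω) ≤ α * ρ X₁ + (1 - α) * ρ X₂) :
    ∀ θ₁ ∈ Θ, ∀ θ₂ ∈ Θ, ∀ α ∈ Set.Icc (0 : ℝ) 1,
      ρ (fun ω => F (α • θ₁ + (1 - α) • θ₂) (ξ ω)) ≤
        α * ρ (fun ω => F θ₁ (ξ ω)) + (1 - α) * ρ (fun ω => F θ₂ (ξ ω)) -
          μ * α * (1 - α) / 2 * ‖θ₁ - θ₂‖ ^ 2 := by
  intro θ₁ hθ₁ θ₂ hθ₂ α hα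
  set c : ℝ := μ * α * (1 - α) / 2 * ‖θ₁ - θ₂‖ ^ 2 with hc
  have hXmem : (fun ω => α * F θ₁ (ξ ω) + (1 - α) * F θ₂ (ξ ω)) ∈ 𝒳 :=
    h𝒳_convex _ (h𝒳_F θ₁ hθ₁) _ (h𝒳_F θ₂ hθ₂) α hα
  have hXc : (fun ω => (α * F θ₁ (ξ ω) + (1 - α) * F θ₂ (ξ ω)) + c) ∈ 𝒳 :=
    h𝒳_const _ hXmem c
  have hθc : α • θ₁ + (1 - α) • θ₂ ∈ Θ :=
    hΘ hθ₁ hθ₂ hα.1 (by linarith [hα.2]) (by ring)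
  have hmono := hρ_mono _ hXc _ (h𝒳_F _ hθc)
    (by filter_upwards [hF_concave] with ω hω
        have := hω θ₁ hθ₁ θ₂ hθ₂ α hα
        linarith)
  have hcash := hρ_cash _ hXmem c
  have hconv := hρ_convex _ (h𝒳_F θ₁ hθ₁) _ (h𝒳_F θ₂ hθ₂) α hα
  rw [hcash] at hmono
  linarith
end

section
/- Suppose: l : ℝ → ℝ is continuously differentiable and strictly increasing; for every θ ∈ B, F(θ, ξ) ∈ 𝒳_l and there exist t_u(θ), t_l(θ) ∈ ℝ with g(t_u(θ), θ) ≤ 0 < g(t_l(θ), θ); for P-almost every ω, the map θ ↦ F(θ, ξ(ω)) is continuously differentiable on B; for every compact set K ⊆ ℝ × B, the random variables sup_{(t,θ)∈K} l'(−F(θ,ξ)−t) and sup_{(t,θ)∈K} l'(−F(θ,ξ)−t)·‖∇F(θ,ξ)‖₂ are integrable; and E[l'(−F(θ,ξ) − h(θ))] > 0 for every θ ∈ B. Then h is continuously differentiable on B and, for every θ ∈ B, ∇h(θ) = − E[l'(−F(θ,ξ) − h(θ)) ∇F(θ,ξ)] / E[l'(−F(θ,ξ) − h(θ))]. -/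
open MeasureTheory Asymptotics Metric Set Filter Topology

theorem le_biSup_real {α : Type*} (K : Set α) (f : α → ℝ) (q : α) (hq : q ∈ K)
    (hb : BddAbove (f '' K)) : f q ≤ ⨆ p ∈ K, f p := by
  have hb' : BddAbove (Set.range fun p => ⨆ _ : p ∈ K, f p) := by
    obtain ⟨M, hM⟩ := hb
    refine ⟨max M 0, ?_⟩
    rintro x ⟨p, rfl⟩
    by_cases h : p ∈ K
    · exact le_trans (le_of_eq (ciSup_pos h : (⨆ _ : p ∈ K, f p) = f p))
        (le_max_of_le_left (hM ⟨p, h, rfl⟩))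
    · have h0 : (⨆ _ : p ∈ K, f p) = 0 := by simp [h, Real.iSup_of_isEmpty]
      show (⨆ _ : p ∈ K, f p) ≤ max M 0
      rw [h0]; exact le_max_right _ _
  calc f q = ⨆ _ : q ∈ K, f q := (ciSup_pos hq : (⨆ _ : q ∈ K, f q) = f q).symm
  _ ≤ ⨆ p ∈ K, f p := le_ciSup hb' q


/-- The UBSR objective `h(θ) = SR_{l,λ}(F(θ, ξ)) = inf { t : E[l(-F(θ,ξ)-t)] ≤ λ }`. -/
noncomputable def hUBSR {Ω : Type*} [MeasurableSpace Ω] (P : Measure Ω)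
    (l : ℝ → ℝ) (lam : ℝ) {d : ℕ} (F : EuclideanSpace ℝ (Fin d) → ℝ → ℝ) (ξ : Ω → ℝ)
    (θ : EuclideanSpace ℝ (Fin d)) : ℝ :=
  sInf {t : ℝ | (∫ ω, l (-F θ (ξ ω) - t) ∂P) ≤ lam}

set_option maxHeartbeats 1600000 in
/-- Expression for the gradient of the UBSR objective
`h(θ) = SR_{l,λ}(F(θ,ξ))`: `h` is continuously differentiable on `B` with
`∇h(θ) = -E[l'(-F(θ,ξ)-h(θ)) ∇F(θ,ξ)] / E[l'(-F(θ,ξ)-h(θ))]`. -/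
theorem ubsr_gradient
    {Ω : Type*} [MeasurableSpace Ω] (P : Measure Ω) [IsProbabilityMeasure P]
    (l l' : ℝ → ℝ) (lam : ℝ)
    (hl_deriv : ∀ x : ℝ, HasDerivAt l (l' x) x)
    (hl'_cont : Continuous l')
    (hl_mono : StrictMono l)
    {d : ℕ} (B : Set (EuclideanSpace ℝ (Fin d))) (hB : IsOpen B)
    (ξ : Ω → ℝ) (F : EuclideanSpace ℝ (Fin d) → ℝ → ℝ)
    (F' : EuclideanSpace ℝ (Fin d) → ℝ → EuclideanSpace ℝ (Fin d))
    (hF_int : ∀ θ ∈ B, ∀ t : ℝ, Integrable (fun ω => l (-F θ (ξ ω) - t)) P)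
    (hbracket : ∀ θ ∈ B, ∃ tu tl : ℝ,
      (∫ ω, l (-F θ (ξ ω) - tu) ∂P) - lam ≤ 0 ∧
      0 < (∫ ω, l (-F θ (ξ ω) - tl) ∂P) - lam)
    (hF_diff : ∀ᵐ ω ∂P, ∀ θ ∈ B,
      HasGradientAt (fun θ' => F θ' (ξ ω)) (F' θ (ξ ω)) θ)
    (hF'_cont : ∀ᵐ ω ∂P, ContinuousOn (fun θ => F' θ (ξ ω)) B)
    (hdom₁ : ∀ K : Set (ℝ × EuclideanSpace ℝ (Fin d)),
      K ⊆ Set.univ ×ˢ B → IsCompact K →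
      Integrable (fun ω => ⨆ p ∈ K, l' (-F p.2 (ξ ω) - p.1)) P)
    (hdom₂ : ∀ K : Set (ℝ × EuclideanSpace ℝ (Fin d)),
      K ⊆ Set.univ ×ˢ B → IsCompact K →
      Integrable (fun ω => ⨆ p ∈ K, l' (-F p.2 (ξ ω) - p.1) * ‖F' p.2 (ξ ω)‖) P)
    (hdenom : ∀ θ ∈ B,
      0 < ∫ ω, l' (-F θ (ξ ω) - hUBSR P l lam F ξ θ) ∂P) :
    (∀ θ ∈ B, HasGradientAt (hUBSR P l lam F ξ)
      (-((∫ ω, l' (-F θ (ξ ω) - hUBSR P l lam F ξ θ) ∂P)⁻¹ •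
        ∫ ω, l' (-F θ (ξ ω) - hUBSR P l lam F ξ θ) • F' θ (ξ ω) ∂P)) θ) ∧
    ContinuousOn (fun θ =>
      -((∫ ω, l' (-F θ (ξ ω) - hUBSR P l lam F ξ θ) ∂P)⁻¹ •
        ∫ ω, l' (-F θ (ξ ω) - hUBSR P l lam F ξ θ) • F' θ (ξ ω) ∂P)) B := by
  classical
  set gg : ℝ × EuclideanSpace ℝ (Fin d) → ℝ :=
    fun p => ∫ ω, l (-F p.2 (ξ ω) - p.1) ∂P with hgg_def
  set D : ℝ × EuclideanSpace ℝ (Fin d) → ℝ :=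
    fun p => ∫ ω, l' (-F p.2 (ξ ω) - p.1) ∂P with hD_def
  set V : ℝ × EuclideanSpace ℝ (Fin d) → EuclideanSpace ℝ (Fin d) :=
    fun p => ∫ ω, l' (-F p.2 (ξ ω) - p.1) • F' p.2 (ξ ω) ∂P with hV_def
  set L : ℝ × EuclideanSpace ℝ (Fin d) → (ℝ × EuclideanSpace ℝ (Fin d)) →L[ℝ] ℝ :=
    fun p => -(D p • ContinuousLinearMap.fst ℝ ℝ (EuclideanSpace ℝ (Fin d)) +
      (InnerProductSpace.toDual ℝ (EuclideanSpace ℝ (Fin d)) (V p)).comp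
        (ContinuousLinearMap.snd ℝ ℝ (EuclideanSpace ℝ (Fin d)))) with hL_def
  set h : EuclideanSpace ℝ (Fin d) → ℝ := hUBSR P l lam F ξ with hh_def
  -- nonnegativity of l'
  have hl'nonneg : ∀ x, 0 ≤ l' x := by
    intro x
    have h1 := hasDerivAt_iff_tendsto_slope.mp (hl_deriv x)
    have h2 : Tendsto (slope l x) (nhdsWithin x (Set.Ioi x)) (nhds (l' x)) :=
      h1.mono_left (nhdsWithin_mono x (fun y hy => ne_of_gt hy))
    refine ge_of_tendsto h2 ?_
    filter_upwards [self_mem_nhdsWithin] with y hy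
    have hxy : (0:ℝ) < y - x := sub_pos.mpr hy
    have hlt : l x < l y := hl_mono hy
    rw [slope_def_field]
    exact div_nonneg (by linarith) hxy.le
  have hlcont : Continuous l := continuous_iff_continuousAt.mpr fun x => (hl_deriv x).continuousAt
  -- measurability of F θ ∘ ξ
  have hXmeas : ∀ θ ∈ B, AEMeasurable (fun ω => F θ (ξ ω)) P := by
    intro θ hθ
    have hme : MeasurableEmbedding (fun x : ℝ => l (-x)) :=
      (hlcont.comp continuous_neg).measurableEmbedding (hl_mono.injective.comp neg_injective)
    have h0 : AEMeasurable ((fun x : ℝ => l (-x)) ∘ fun ω => F θ (ξ ω)) P := by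
      have := (hF_int θ hθ 0).aestronglyMeasurable.aemeasurable
      simpa [Function.comp_def, sub_zero] using this
    exact hme.aemeasurable_comp_iff.mp h0
  -- measurability of F' θ ∘ ξ
  have hF'meas : ∀ θ ∈ B, AEMeasurable (fun ω => F' θ (ξ ω)) P := by
    intro θ hθ
    obtain ⟨r, hr, hrB⟩ : ∃ r > 0, ball θ r ⊆ B := Metric.isOpen_iff.mp hB θ hθ
    have hcoord : ∀ i : Fin d, AEMeasurable (fun ω => F' θ (ξ ω) i) P := by
      intro i
      obtain ⟨N, hN⟩ := exists_nat_gt (1/r)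
      set c : ℕ → ℝ := fun n => (n : ℝ) + N + 1 with hc_def
      have hcpos : ∀ n, (0:ℝ) < c n := by
        intro n; simp only [hc_def]; positivity
      have hcbig : ∀ n, 1/r < c n := by
        intro n
        have hle : (N:ℝ) ≤ (n:ℝ) + N := le_add_of_nonneg_left (Nat.cast_nonneg n)
        simp only [hc_def]; linarith
      have hctend : Tendsto (fun n => ‖c n‖) atTop atTop := by
        have : Tendsto c atTop atTop := by
          apply tendsto_atTop_add_const_right
          apply tendsto_atTop_add_const_right
          exact tendsto_natCast_atTop_atTop
        exact tendsto_abs_atTop_atTop.comp this |>.congr (fun n => (Real.norm_eq_abs _).symm) |>.mono_left le_rfl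
      have hmem : ∀ n, θ + (c n)⁻¹ • (EuclideanSpace.single i (1:ℝ)) ∈ B := by
        intro n
        apply hrB
        rw [mem_ball, dist_eq_norm]
        have : θ + (c n)⁻¹ • EuclideanSpace.single i (1:ℝ) - θ
            = (c n)⁻¹ • EuclideanSpace.single i (1:ℝ) := by abel
        rw [this, norm_smul, EuclideanSpace.norm_single]
        simp only [norm_inv, Real.norm_eq_abs, abs_of_pos (hcpos n), abs_one, mul_one]
        rw [inv_lt_comm₀ (hcpos n) hr] at *
        · exact (one_div r ▸ hcbig n)
      have hmeasn : ∀ n : ℕ, AEMeasurable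
          (fun ω => c n • (F (θ + (c n)⁻¹ • EuclideanSpace.single i (1:ℝ)) (ξ ω) - F θ (ξ ω))) P :=
        fun n => ((hXmeas _ (hmem n)).sub (hXmeas θ hθ)).const_smul (c n)
      have htend : ∀ᵐ ω ∂P, Tendsto
          (fun n => c n • (F (θ + (c n)⁻¹ • EuclideanSpace.single i (1:ℝ)) (ξ ω) - F θ (ξ ω)))
          atTop (𝓝 (F' θ (ξ ω) i)) := by
        filter_upwards [hF_diff] with ω hω
        have h1 := (hω θ hθ).hasFDerivAt.lim (EuclideanSpace.single i (1:ℝ)) hctend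
        have h2 : (InnerProductSpace.toDual ℝ (EuclideanSpace ℝ (Fin d)) (F' θ (ξ ω)))
            (EuclideanSpace.single i (1:ℝ)) = F' θ (ξ ω) i := by
          show (inner ℝ (F' θ (ξ ω)) (EuclideanSpace.single i (1:ℝ)) : ℝ) = _
          rw [EuclideanSpace.inner_single_right]; simp
        rw [h2] at h1
        exact h1
      exact aemeasurable_of_tendsto_metrizable_ae atTop hmeasn htend
    have hrep : (fun ω => F' θ (ξ ω))
        = fun ω => ∑ i, (F' θ (ξ ω) i) • EuclideanSpace.single i (1:ℝ) := by
      funext ω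
      have := (EuclideanSpace.basisFun (Fin d) ℝ).sum_repr (F' θ (ξ ω))
      simp only [EuclideanSpace.basisFun_repr, EuclideanSpace.basisFun_apply] at this
      exact this.symm
    rw [hrep]
    exact Finset.aemeasurable_fun_sum _ fun i _ => (hcoord i).smul_const _
  -- a.e. continuity on the product
  have hFcont : ∀ᵐ ω ∂P, ContinuousOn (fun θ' => F θ' (ξ ω)) B :=
    hF_diff.mono fun ω hω θ' hθ' => ((hω θ' hθ').hasFDerivAt.continuousAt).continuousWithinAt
  have hprodcont : ∀ᵐ ω ∂P,
      ContinuousOn (fun p : ℝ × EuclideanSpace ℝ (Fin d) => -F p.2 (ξ ω) - p.1) (univ ×ˢ B) ∧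
      ContinuousOn (fun p : ℝ × EuclideanSpace ℝ (Fin d) => F' p.2 (ξ ω)) (univ ×ˢ B) := by
    filter_upwards [hFcont, hF'_cont] with ω h1 h2
    have hsnd : MapsTo (Prod.snd) ((univ : Set ℝ) ×ˢ B) B := fun p hp => hp.2
    exact ⟨((h1.comp continuous_snd.continuousOn hsnd).neg).sub continuous_fst.continuousOn,
      h2.comp continuous_snd.continuousOn hsnd⟩
  have hopen : IsOpen ((univ : Set ℝ) ×ˢ B) := isOpen_univ.prod hB
  -- the continuous map from a gradient vector to the relevant CLM
  have hΨcont : Continuous (fun w : EuclideanSpace ℝ (Fin d) =>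
      -((InnerProductSpace.toDual ℝ (EuclideanSpace ℝ (Fin d)) w).comp
        (ContinuousLinearMap.snd ℝ ℝ (EuclideanSpace ℝ (Fin d)))) -
      ContinuousLinearMap.fst ℝ ℝ (EuclideanSpace ℝ (Fin d))) := by
    refine Continuous.sub (Continuous.neg ?_) continuous_const
    exact ((ContinuousLinearMap.compL ℝ (ℝ × EuclideanSpace ℝ (Fin d))
      (EuclideanSpace ℝ (Fin d)) ℝ).flip
      (ContinuousLinearMap.snd ℝ ℝ _)).continuous.comp (InnerProductSpace.toDual ℝ _).continuous
  have hmeas1 : ∀ q : ℝ × EuclideanSpace ℝ (Fin d), q.2 ∈ B →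
      AEStronglyMeasurable (fun ω => l' (-F q.2 (ξ ω) - q.1)) P := fun q hq =>
    (hl'_cont.measurable.comp_aemeasurable (((hXmeas q.2 hq).neg).sub aemeasurable_const)).aestronglyMeasurable
  -- the key differentiation/continuity package
  have key : ∀ p₀ : ℝ × EuclideanSpace ℝ (Fin d), p₀.2 ∈ B →
      Integrable (fun ω => l' (-F p₀.2 (ξ ω) - p₀.1)) P ∧
      Integrable (fun ω => l' (-F p₀.2 (ξ ω) - p₀.1) • F' p₀.2 (ξ ω)) P ∧
      HasFDerivAt gg (L p₀) p₀ ∧ ContinuousAt D p₀ ∧ ContinuousAt V p₀ := by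
    intro p₀ hp₀
    obtain ⟨r₁, hr₁, hrB₁⟩ : ∃ r > 0, ball p₀.2 r ⊆ B := Metric.isOpen_iff.mp hB _ hp₀
    set r := r₁/2 with hr_def
    have hr : 0 < r := by simp only [hr_def]; linarith
    have hrB : closedBall p₀.2 r ⊆ B :=
      subset_trans (closedBall_subset_ball (by simp only [hr_def]; linarith)) hrB₁
    set K : Set (ℝ × EuclideanSpace ℝ (Fin d)) := closedBall p₀ r with hK_def
    have hKeq : K = closedBall p₀.1 r ×ˢ closedBall p₀.2 r := by
      rw [hK_def, ← closedBall_prod_same]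
    have hKsub : K ⊆ univ ×ˢ B := by
      rw [hKeq]; exact prod_mono (subset_univ _) hrB
    have hKcomp : IsCompact K := isCompact_closedBall _ _
    set bound : Ω → ℝ := fun ω => (⨆ p ∈ K, l' (-F p.2 (ξ ω) - p.1)) +
      ⨆ p ∈ K, l' (-F p.2 (ξ ω) - p.1) * ‖F' p.2 (ξ ω)‖ with hbound_def
    have hbound_int : Integrable bound P := (hdom₁ K hKsub hKcomp).add (hdom₂ K hKsub hKcomp)
    have hae_bd : ∀ᵐ ω ∂P, ∀ q ∈ K,
        l' (-F q.2 (ξ ω) - q.1) ≤ (⨆ p ∈ K, l' (-F p.2 (ξ ω) - p.1)) ∧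
        l' (-F q.2 (ξ ω) - q.1) * ‖F' q.2 (ξ ω)‖ ≤
          ⨆ p ∈ K, l' (-F p.2 (ξ ω) - p.1) * ‖F' p.2 (ξ ω)‖ := by
      filter_upwards [hprodcont] with ω hω
      obtain ⟨h1, h2⟩ := hω
      intro q hq
      have c1 : ContinuousOn (fun p : ℝ × EuclideanSpace ℝ (Fin d) =>
          l' (-F p.2 (ξ ω) - p.1)) K := (hl'_cont.comp_continuousOn h1).mono hKsub
      have c2 : ContinuousOn (fun p : ℝ × EuclideanSpace ℝ (Fin d) =>
          l' (-F p.2 (ξ ω) - p.1) * ‖F' p.2 (ξ ω)‖) K :=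
        ((hl'_cont.comp_continuousOn h1).mul h2.norm).mono hKsub
      exact ⟨le_biSup_real K _ q hq (hKcomp.image_of_continuousOn c1).bddAbove,
        le_biSup_real K _ q hq (hKcomp.image_of_continuousOn c2).bddAbove⟩
    have hmemK : p₀ ∈ K := mem_closedBall_self hr.le
    have Int1 : ∀ q ∈ K, Integrable (fun ω => l' (-F q.2 (ξ ω) - q.1)) P := by
      intro q hq
      refine Integrable.mono' (hdom₁ K hKsub hKcomp) (hmeas1 q (hKsub hq).2) ?_
      filter_upwards [hae_bd] with ω hω
      rw [Real.norm_eq_abs, abs_of_nonneg (hl'nonneg _)]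
      exact (hω q hq).1
    have Int2 : ∀ q ∈ K, Integrable (fun ω => l' (-F q.2 (ξ ω) - q.1) • F' q.2 (ξ ω)) P := by
      intro q hq
      refine Integrable.mono' (hdom₂ K hKsub hKcomp)
        ((hmeas1 q (hKsub hq).2).smul ((hF'meas q.2 (hKsub hq).2).aestronglyMeasurable)) ?_
      filter_upwards [hae_bd] with ω hω
      rw [norm_smul, Real.norm_eq_abs, abs_of_nonneg (hl'nonneg _)]
      exact (hω q hq).2
    -- the pointwise derivative (in the parameter) of the integrand
    set A : ℝ × EuclideanSpace ℝ (Fin d) → Ω → (ℝ × EuclideanSpace ℝ (Fin d)) →L[ℝ] ℝ :=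
      fun p ω => l' (-F p.2 (ξ ω) - p.1) •
        (-((InnerProductSpace.toDual ℝ (EuclideanSpace ℝ (Fin d)) (F' p.2 (ξ ω))).comp
          (ContinuousLinearMap.snd ℝ ℝ (EuclideanSpace ℝ (Fin d)))) -
          ContinuousLinearMap.fst ℝ ℝ (EuclideanSpace ℝ (Fin d))) with hA_def
    have hAmeas : ∀ q : ℝ × EuclideanSpace ℝ (Fin d), q.2 ∈ B →
        AEStronglyMeasurable (A q) P := fun q hq =>
      (hmeas1 q hq).smul ((hΨcont.measurable.comp_aemeasurable (hF'meas q.2 hq)).aestronglyMeasurable)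
    have hApt : ∀ p : ℝ × EuclideanSpace ℝ (Fin d), ∀ ω,
        ∀ x : ℝ × EuclideanSpace ℝ (Fin d),
        A p ω x = l' (-F p.2 (ξ ω) - p.1) * (-(inner ℝ (F' p.2 (ξ ω)) x.2 : ℝ) - x.1) := by
      intro p ω x
      simp only [hA_def, ContinuousLinearMap.smul_apply, ContinuousLinearMap.sub_apply,
        ContinuousLinearMap.neg_apply, ContinuousLinearMap.comp_apply,
        ContinuousLinearMap.coe_fst', ContinuousLinearMap.coe_snd',
        InnerProductSpace.toDual_apply_apply, smul_eq_mul]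
    have hAbound : ∀ᵐ ω ∂P, ∀ p ∈ ball p₀ r, ‖A p ω‖ ≤ bound ω := by
      filter_upwards [hae_bd] with ω hω p hp
      have hpK : p ∈ K := ball_subset_closedBall hp
      have hc : 0 ≤ l' (-F p.2 (ξ ω) - p.1) := hl'nonneg _
      have hA_le : ‖A p ω‖ ≤ l' (-F p.2 (ξ ω) - p.1) +
          l' (-F p.2 (ξ ω) - p.1) * ‖F' p.2 (ξ ω)‖ := by
        apply ContinuousLinearMap.opNorm_le_bound _ (by positivity)
        intro x
        rw [hApt p ω x]
        have hb1 : |(-(inner ℝ (F' p.2 (ξ ω)) x.2 : ℝ) - x.1)| ≤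
            ‖F' p.2 (ξ ω)‖ * ‖x.2‖ + |x.1| := by
          refine (abs_sub _ _).trans ?_
          rw [abs_neg]
          exact add_le_add (abs_real_inner_le_norm _ _) le_rfl
        rw [Real.norm_eq_abs, abs_mul, abs_of_nonneg hc]
        calc l' (-F p.2 (ξ ω) - p.1) * |(-(inner ℝ (F' p.2 (ξ ω)) x.2 : ℝ) - x.1)|
            ≤ l' (-F p.2 (ξ ω) - p.1) * (‖F' p.2 (ξ ω)‖ * ‖x‖ + ‖x‖) := by
              apply mul_le_mul_of_nonneg_left _ hc
              refine hb1.trans (add_le_add ?_ ?_)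
              · exact mul_le_mul_of_nonneg_left (norm_snd_le x) (norm_nonneg _)
              · exact (Real.norm_eq_abs x.1) ▸ norm_fst_le x
          _ = (l' (-F p.2 (ξ ω) - p.1) + l' (-F p.2 (ξ ω) - p.1) * ‖F' p.2 (ξ ω)‖) * ‖x‖ := by
              ring
      refine hA_le.trans ?_
      exact add_le_add (hω p hpK).1 (hω p hpK).2
    have hdiffA : ∀ᵐ ω ∂P, ∀ p ∈ ball p₀ r,
        HasFDerivAt (fun q : ℝ × EuclideanSpace ℝ (Fin d) => l (-F q.2 (ξ ω) - q.1))
          (A p ω) p := by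
      filter_upwards [hF_diff] with ω hω p hp
      have hp2 : p.2 ∈ B := (hKsub (ball_subset_closedBall hp)).2
      have h1 : HasFDerivAt (fun q : ℝ × EuclideanSpace ℝ (Fin d) => F q.2 (ξ ω))
          ((InnerProductSpace.toDual ℝ _ (F' p.2 (ξ ω))).comp
            (ContinuousLinearMap.snd ℝ ℝ _)) p :=
        (hω p.2 hp2).hasFDerivAt.comp p hasFDerivAt_snd
      exact (hl_deriv _).comp_hasFDerivAt p (h1.neg.sub hasFDerivAt_fst)
    have hmemnhds : ∀ᶠ p : ℝ × EuclideanSpace ℝ (Fin d) in 𝓝 p₀, p.2 ∈ B :=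
      eventually_of_mem (continuousAt_snd.preimage_mem_nhds (hB.mem_nhds hp₀)) (fun p hp => hp)
    have hballnhds : ∀ᶠ p : ℝ × EuclideanSpace ℝ (Fin d) in 𝓝 p₀, p ∈ ball p₀ r :=
      eventually_of_mem (ball_mem_nhds p₀ hr) (fun p hp => hp)
    have hmeasgg : ∀ᶠ p : ℝ × EuclideanSpace ℝ (Fin d) in 𝓝 p₀,
        AEStronglyMeasurable (fun ω => l (-F p.2 (ξ ω) - p.1)) P := by
      filter_upwards [hmemnhds] with p hp
      exact (hF_int p.2 hp p.1).aestronglyMeasurable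
    have hFDgg' : HasFDerivAt gg (∫ ω, A p₀ ω ∂P) p₀ :=
      hasFDerivAt_integral_of_dominated_of_fderiv_le (ball_mem_nhds p₀ hr) hmeasgg (hF_int p₀.2 hp₀ p₀.1)
        (hAmeas p₀ hp₀) hAbound hbound_int hdiffA
    have hIntA : Integrable (A p₀) P := by
      refine Integrable.mono' hbound_int (hAmeas p₀ hp₀) ?_
      filter_upwards [hAbound] with ω hω
      exact hω p₀ (mem_ball_self hr)
    have hLeq : (∫ ω, A p₀ ω ∂P) = L p₀ := by
      apply ContinuousLinearMap.ext; intro x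
      rw [ContinuousLinearMap.integral_apply hIntA]
      have h1 : ∀ ω, A p₀ ω x =
          -((inner ℝ (l' (-F p₀.2 (ξ ω) - p₀.1) • F' p₀.2 (ξ ω)) x.2 : ℝ) +
            l' (-F p₀.2 (ξ ω) - p₀.1) * x.1) := by
        intro ω
        rw [hApt p₀ ω x, real_inner_smul_left]
        ring
      simp_rw [h1]
      have i2 : Integrable (fun ω =>
          (inner ℝ (l' (-F p₀.2 (ξ ω) - p₀.1) • F' p₀.2 (ξ ω)) x.2 : ℝ)) P :=
        (Int2 p₀ hmemK).inner_const x.2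
      have i1 : Integrable (fun ω => l' (-F p₀.2 (ξ ω) - p₀.1) * x.1) P :=
        (Int1 p₀ hmemK).mul_const x.1
      rw [integral_neg, integral_add i2 i1, integral_mul_const]
      have h2 : ∫ ω, (inner ℝ (l' (-F p₀.2 (ξ ω) - p₀.1) • F' p₀.2 (ξ ω)) x.2 : ℝ) ∂P
          = (inner ℝ (V p₀) x.2 : ℝ) := by
        calc ∫ ω, (inner ℝ (l' (-F p₀.2 (ξ ω) - p₀.1) • F' p₀.2 (ξ ω)) x.2 : ℝ) ∂P
            = ∫ ω, (inner ℝ x.2 (l' (-F p₀.2 (ξ ω) - p₀.1) • F' p₀.2 (ξ ω)) : ℝ) ∂P := by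
              apply integral_congr_ae
              filter_upwards with ω
              rw [real_inner_comm]
          _ = (inner ℝ x.2 (V p₀) : ℝ) := integral_inner (Int2 p₀ hmemK) x.2
          _ = (inner ℝ (V p₀) x.2 : ℝ) := real_inner_comm _ _
      rw [h2]
      simp only [hL_def, ContinuousLinearMap.neg_apply, ContinuousLinearMap.add_apply,
        ContinuousLinearMap.smul_apply, ContinuousLinearMap.coe_fst',
        ContinuousLinearMap.comp_apply, ContinuousLinearMap.coe_snd',
        InnerProductSpace.toDual_apply_apply, smul_eq_mul]
      ring
    have hcontD : ContinuousAt D p₀ := by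
      rw [hD_def]
      apply continuousAt_of_dominated (bound := bound)
      · filter_upwards [hmemnhds] with p hp
        exact hmeas1 p hp
      · filter_upwards [hballnhds] with p hp
        filter_upwards [hae_bd] with ω hω
        rw [Real.norm_eq_abs, abs_of_nonneg (hl'nonneg _)]
        have hpK := ball_subset_closedBall hp
        refine (hω p hpK).1.trans (le_add_of_nonneg_right ?_)
        refine le_trans ?_ (hω p hpK).2
        exact mul_nonneg (hl'nonneg _) (norm_nonneg _)
      · exact hbound_int
      · filter_upwards [hprodcont] with ω hω
        obtain ⟨h1, _⟩ := hω
        exact (hl'_cont.comp_continuousOn h1).continuousAt (hopen.mem_nhds ⟨trivial, hp₀⟩)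
    have hcontV : ContinuousAt V p₀ := by
      rw [hV_def]
      apply continuousAt_of_dominated (bound := bound)
      · filter_upwards [hmemnhds] with p hp
        exact (hmeas1 p hp).smul ((hF'meas p.2 hp).aestronglyMeasurable)
      · filter_upwards [hballnhds] with p hp
        filter_upwards [hae_bd] with ω hω
        rw [norm_smul, Real.norm_eq_abs, abs_of_nonneg (hl'nonneg _)]
        exact le_trans (hω p (ball_subset_closedBall hp)).2 (le_add_of_nonneg_left (by
          have := (hω p (ball_subset_closedBall hp)).1
          have h0 : 0 ≤ l' (-F p.2 (ξ ω) - p.1) := hl'nonneg _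
          linarith))
      · exact hbound_int
      · filter_upwards [hprodcont] with ω hω
        obtain ⟨h1, h2⟩ := hω
        exact ((hl'_cont.comp_continuousOn h1).smul h2).continuousAt
          (hopen.mem_nhds ⟨trivial, hp₀⟩)
    exact ⟨Int1 p₀ hmemK, Int2 p₀ hmemK, hLeq ▸ hFDgg', hcontD, hcontV⟩
  -- strict antitonicity of g in t
  have hganti : ∀ θ ∈ B, StrictAnti (fun t => gg (t, θ)) := by
    intro θ hθ t s hts
    have hpt : ∀ ω, 0 < l (-F θ (ξ ω) - t) - l (-F θ (ξ ω) - s) := by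
      intro ω
      have h1 : -F θ (ξ ω) - s < -F θ (ξ ω) - t := by linarith
      have := hl_mono h1
      linarith
    have hint : Integrable (fun ω => l (-F θ (ξ ω) - t) - l (-F θ (ξ ω) - s)) P :=
      (hF_int θ hθ t).sub (hF_int θ hθ s)
    have hpos : 0 < ∫ ω, (l (-F θ (ξ ω) - t) - l (-F θ (ξ ω) - s)) ∂P := by
      rw [integral_pos_iff_support_of_nonneg (fun ω => (hpt ω).le) hint]
      have hsupp : Function.support (fun ω => l (-F θ (ξ ω) - t) - l (-F θ (ξ ω) - s))
          = Set.univ := by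
        ext ω; simp [Function.mem_support, (hpt ω).ne']
      rw [hsupp]
      simp
    rw [integral_sub (hF_int θ hθ t) (hF_int θ hθ s)] at hpos
    show gg (s, θ) < gg (t, θ)
    have e1 : gg (s, θ) = ∫ ω, l (-F θ (ξ ω) - s) ∂P := rfl
    have e2 : gg (t, θ) = ∫ ω, l (-F θ (ξ ω) - t) ∂P := rfl
    rw [e1, e2]; linarith
  -- continuity of g in t
  have hcont_t : ∀ θ ∈ B, Continuous (fun t => gg (t, θ)) := by
    intro θ hθ
    rw [continuous_iff_continuousAt]
    intro t
    exact ContinuousAt.comp (f := fun s : ℝ => ((s, θ) : ℝ × EuclideanSpace ℝ (Fin d)))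
      ((key (t, θ) hθ).2.2.1.continuousAt)
      ((continuous_id.prodMk continuous_const).continuousAt)
  -- the bracketing hypothesis in terms of gg
  have hS : ∀ θ ∈ B, ∃ tu tl : ℝ, gg (tu, θ) ≤ lam ∧ lam < gg (tl, θ) := by
    intro θ hθ
    obtain ⟨tu, tl, h1, h2⟩ := hbracket θ hθ
    have e1 : gg (tu, θ) = ∫ ω, l (-F θ (ξ ω) - tu) ∂P := rfl
    have e2 : gg (tl, θ) = ∫ ω, l (-F θ (ξ ω) - tl) ∂P := rfl
    exact ⟨tu, tl, by rw [e1]; linarith, by rw [e2]; linarith⟩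
  -- h θ is the root of gg (·, θ) = lam
  have hroot : ∀ θ ∈ B, gg (h θ, θ) = lam := by
    intro θ hθ
    obtain ⟨tu, tl, h1, h2⟩ := hS θ hθ
    have hhθ : h θ = sInf {t : ℝ | gg (t, θ) ≤ lam} := rfl
    have hne : Set.Nonempty {t : ℝ | gg (t, θ) ≤ lam} := ⟨tu, h1⟩
    have hbdd : BddBelow {t : ℝ | gg (t, θ) ≤ lam} := by
      refine ⟨tl, fun t ht => ?_⟩
      by_contra hc
      push_neg at hc
      have hmono := (hganti θ hθ).antitone hc.le
      have : lam < gg (t, θ) := lt_of_lt_of_le h2 hmono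
      exact absurd ht (not_le.mpr this)
    have hle : gg (h θ, θ) ≤ lam := by
      have hev : ∀ ε > (0:ℝ), gg (h θ + ε, θ) ≤ lam := by
        intro ε hε
        obtain ⟨t, htS, htlt⟩ := (csInf_lt_iff hbdd hne).mp
          (show sInf {t : ℝ | gg (t, θ) ≤ lam} < h θ + ε by rw [← hhθ]; linarith)
        exact le_trans ((hganti θ hθ).antitone htlt.le) htS
      have hc : Continuous (fun ε : ℝ => gg (h θ + ε, θ)) :=
        (hcont_t θ hθ).comp (continuous_const.add continuous_id)
      have ht0 : Tendsto (fun ε : ℝ => gg (h θ + ε, θ)) (𝓝 0) (𝓝 (gg (h θ + 0, θ))) :=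
        hc.tendsto 0
      rw [add_zero] at ht0
      refine le_of_tendsto (ht0.mono_left (nhdsWithin_le_nhds (s := Set.Ioi (0:ℝ)))) ?_
      filter_upwards [self_mem_nhdsWithin] with ε hε
      exact hev ε hε
    have hge : lam ≤ gg (h θ, θ) := by
      by_contra hc
      push_neg at hc
      have hcont : Tendsto (fun t => gg (t, θ)) (𝓝 (h θ)) (𝓝 (gg (h θ, θ))) :=
        (hcont_t θ hθ).continuousAt
      have hev : ∀ᶠ t in 𝓝 (h θ), gg (t, θ) < lam := hcont.eventually_lt_const hc
      obtain ⟨δ, hδ, hball⟩ := Metric.eventually_nhds_iff.mp hev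
      have hmem : (h θ - δ/2) ∈ {t : ℝ | gg (t, θ) ≤ lam} := by
        refine le_of_lt (hball ?_)
        rw [Real.dist_eq]
        have e3 : h θ - δ/2 - h θ = -(δ/2) := by ring
        rw [e3, abs_neg, abs_of_pos (by linarith)]
        linarith
      have := csInf_le hbdd hmem
      rw [← hhθ] at this
      linarith
    linarith
  -- continuity of h on B
  have hhcont : ∀ θ₀ ∈ B, ContinuousAt h θ₀ := by
    intro θ₀ hθ₀
    rw [ContinuousAt, Metric.tendsto_nhds]
    intro ε hε
    have hlt1 : gg (h θ₀ + ε/2, θ₀) < lam := by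
      rw [← hroot θ₀ hθ₀]
      exact hganti θ₀ hθ₀ (by linarith)
    have hlt2 : lam < gg (h θ₀ - ε/2, θ₀) := by
      rw [← hroot θ₀ hθ₀]
      exact hganti θ₀ hθ₀ (by linarith)
    have hc1 : ContinuousAt (fun θ => gg (h θ₀ + ε/2, θ)) θ₀ :=
      ContinuousAt.comp
        (f := fun θ : EuclideanSpace ℝ (Fin d) => ((h θ₀ + ε/2, θ) : ℝ × EuclideanSpace ℝ (Fin d)))
        ((key (h θ₀ + ε/2, θ₀) hθ₀).2.2.1.continuousAt)
        ((continuous_const.prodMk continuous_id).continuousAt)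
    have hc2 : ContinuousAt (fun θ => gg (h θ₀ - ε/2, θ)) θ₀ :=
      ContinuousAt.comp
        (f := fun θ : EuclideanSpace ℝ (Fin d) => ((h θ₀ - ε/2, θ) : ℝ × EuclideanSpace ℝ (Fin d)))
        ((key (h θ₀ - ε/2, θ₀) hθ₀).2.2.1.continuousAt)
        ((continuous_const.prodMk continuous_id).continuousAt)
    have hev1 : ∀ᶠ θ in 𝓝 θ₀, gg (h θ₀ + ε/2, θ) < lam := hc1.eventually_lt_const hlt1
    have hev2 : ∀ᶠ θ in 𝓝 θ₀, lam < gg (h θ₀ - ε/2, θ) := hc2.eventually_const_lt hlt2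
    have hevB : ∀ᶠ θ in 𝓝 θ₀, θ ∈ B := eventually_of_mem (hB.mem_nhds hθ₀) fun θ hθ => hθ
    filter_upwards [hev1, hev2, hevB] with θ h1 h2 hθB
    have hrootθ := hroot θ hθB
    have ha : h θ < h θ₀ + ε/2 := by
      by_contra hcon
      push_neg at hcon
      have := (hganti θ hθB).antitone hcon
      rw [hrootθ] at this
      linarith
    have hb : h θ₀ - ε/2 < h θ := by
      by_contra hcon
      push_neg at hcon
      have := (hganti θ hθB).antitone hcon
      rw [hrootθ] at this
      linarith
    rw [Real.dist_eq, abs_sub_lt_iff]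
    constructor <;> linarith
  have hD0pos : ∀ θ ∈ B, 0 < D (h θ, θ) := fun θ hθ => hdenom θ hθ
  -- differentiability of h
  have main1 : ∀ θ₀ ∈ B, HasGradientAt h (-((D (h θ₀, θ₀))⁻¹ • V (h θ₀, θ₀))) θ₀ := by
    intro θ₀ hθ₀
    have hD₀ : 0 < D (h θ₀, θ₀) := hD0pos θ₀ hθ₀
    have hfd : HasFDerivAt gg (L (h θ₀, θ₀)) (h θ₀, θ₀) := (key (h θ₀, θ₀) hθ₀).2.2.1
    have h1 : (fun p => gg p - gg (h θ₀, θ₀) - L (h θ₀, θ₀) (p - (h θ₀, θ₀)))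
        =o[𝓝 ((h θ₀, θ₀) : ℝ × EuclideanSpace ℝ (Fin d))] fun p => p - (h θ₀, θ₀) :=
      hfd.isLittleO
    have hφ : Tendsto (fun θ => ((h θ, θ) : ℝ × EuclideanSpace ℝ (Fin d))) (𝓝 θ₀)
        (𝓝 (h θ₀, θ₀)) := (hhcont θ₀ hθ₀).prodMk continuousAt_id
    have h2 : (fun θ => gg (h θ, θ) - gg (h θ₀, θ₀) - L (h θ₀, θ₀) ((h θ, θ) - (h θ₀, θ₀)))
        =o[𝓝 θ₀] (fun θ => ((h θ, θ) : ℝ × EuclideanSpace ℝ (Fin d)) - (h θ₀, θ₀)) :=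
      h1.comp_tendsto hφ
    have hevB : ∀ᶠ θ in 𝓝 θ₀, θ ∈ B := eventually_of_mem (hB.mem_nhds hθ₀) fun θ hθ => hθ
    have hLpt : ∀ θ, L (h θ₀, θ₀) (((h θ, θ) : ℝ × EuclideanSpace ℝ (Fin d)) - (h θ₀, θ₀))
        = -(D (h θ₀, θ₀) * (h θ - h θ₀) +
            (inner ℝ (V (h θ₀, θ₀)) (θ - θ₀) : ℝ)) := by
      intro θ
      simp only [hL_def, ContinuousLinearMap.neg_apply, ContinuousLinearMap.add_apply,
        ContinuousLinearMap.smul_apply, ContinuousLinearMap.coe_fst',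
        ContinuousLinearMap.comp_apply, ContinuousLinearMap.coe_snd',
        InnerProductSpace.toDual_apply_apply, smul_eq_mul, Prod.fst_sub, Prod.snd_sub]
    have h3 : (fun θ => D (h θ₀, θ₀) * (h θ - h θ₀) + (inner ℝ (V (h θ₀, θ₀)) (θ - θ₀) : ℝ))
        =o[𝓝 θ₀] (fun θ => ((h θ, θ) : ℝ × EuclideanSpace ℝ (Fin d)) - (h θ₀, θ₀)) := by
      refine IsLittleO.congr' (h2.congr' ?_ EventuallyEq.rfl) EventuallyEq.rfl EventuallyEq.rfl
      filter_upwards [hevB] with θ hθ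
      rw [hroot θ hθ, hroot θ₀ hθ₀, hLpt θ]
      ring
    have hnp : ∀ θ, ‖((h θ, θ) : ℝ × EuclideanSpace ℝ (Fin d)) - (h θ₀, θ₀)‖
        = max |h θ - h θ₀| ‖θ - θ₀‖ := by
      intro θ
      rw [Prod.norm_def]
      simp [Real.norm_eq_abs]
    set C : ℝ := (D (h θ₀, θ₀)/2 + ‖V (h θ₀, θ₀)‖) / (D (h θ₀, θ₀)/2) with hC_def
    have hC1 : 1 ≤ C := by
      rw [hC_def]
      rw [le_div_iff₀ (by linarith)]
      have := norm_nonneg (V (h θ₀, θ₀))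
      linarith
    have hO : (fun θ => ((h θ, θ) : ℝ × EuclideanSpace ℝ (Fin d)) - (h θ₀, θ₀))
        =O[𝓝 θ₀] fun θ => θ - θ₀ := by
      rw [isBigO_iff]
      refine ⟨C, ?_⟩
      have hsmall := (isLittleO_iff.mp h3) (half_pos hD₀)
      filter_upwards [hsmall] with θ hsm
      rw [Real.norm_eq_abs, hnp θ] at hsm
      rw [hnp θ]
      set a : ℝ := h θ - h θ₀
      set b : ℝ := ‖θ - θ₀‖
      have hb0 : 0 ≤ b := norm_nonneg _
      have hVb : |(inner ℝ (V (h θ₀, θ₀)) (θ - θ₀) : ℝ)| ≤ ‖V (h θ₀, θ₀)‖ * b :=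
        abs_real_inner_le_norm _ _
      have hmax : max |a| b ≤ |a| + b :=
        max_le (le_add_of_nonneg_right hb0) (le_add_of_nonneg_left (abs_nonneg a))
      have htri : |D (h θ₀, θ₀) * a| ≤
          |D (h θ₀, θ₀) * a + (inner ℝ (V (h θ₀, θ₀)) (θ - θ₀) : ℝ)| +
          |(inner ℝ (V (h θ₀, θ₀)) (θ - θ₀) : ℝ)| := by
        have habs := abs_add_le (D (h θ₀, θ₀) * a + (inner ℝ (V (h θ₀, θ₀)) (θ - θ₀) : ℝ))
          (-(inner ℝ (V (h θ₀, θ₀)) (θ - θ₀) : ℝ))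
        rw [abs_neg] at habs
        have : D (h θ₀, θ₀) * a + (inner ℝ (V (h θ₀, θ₀)) (θ - θ₀) : ℝ) +
            -(inner ℝ (V (h θ₀, θ₀)) (θ - θ₀) : ℝ) = D (h θ₀, θ₀) * a := by ring
        rwa [this] at habs
      rw [abs_mul, abs_of_pos hD₀] at htri
      have h5 : (D (h θ₀, θ₀)/2) * |a| ≤ (D (h θ₀, θ₀)/2 + ‖V (h θ₀, θ₀)‖) * b := by
        have h6 : D (h θ₀, θ₀) * |a| ≤
            (D (h θ₀, θ₀)/2) * (|a| + b) + ‖V (h θ₀, θ₀)‖ * b := by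
          calc D (h θ₀, θ₀) * |a| ≤
              |D (h θ₀, θ₀) * a + (inner ℝ (V (h θ₀, θ₀)) (θ - θ₀) : ℝ)| +
              |(inner ℝ (V (h θ₀, θ₀)) (θ - θ₀) : ℝ)| := htri
            _ ≤ (D (h θ₀, θ₀)/2) * max |a| b + ‖V (h θ₀, θ₀)‖ * b := add_le_add hsm hVb
            _ ≤ (D (h θ₀, θ₀)/2) * (|a| + b) + ‖V (h θ₀, θ₀)‖ * b := by
                have := mul_le_mul_of_nonneg_left hmax (by linarith : (0:ℝ) ≤ D (h θ₀, θ₀)/2)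
                linarith
        linarith
      have ha_le : |a| ≤ C * b := by
        rw [hC_def, div_mul_eq_mul_div, le_div_iff₀ (by linarith)]
        calc |a| * (D (h θ₀, θ₀)/2) = (D (h θ₀, θ₀)/2) * |a| := by ring
          _ ≤ (D (h θ₀, θ₀)/2 + ‖V (h θ₀, θ₀)‖) * b := h5
      exact max_le ha_le (le_mul_of_one_le_left hb0 hC1)
    have h7 : (fun θ => D (h θ₀, θ₀) * (h θ - h θ₀) + (inner ℝ (V (h θ₀, θ₀)) (θ - θ₀) : ℝ))
        =o[𝓝 θ₀] fun θ => θ - θ₀ := h3.trans_isBigO hO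
    rw [hasGradientAt_iff_hasFDerivAt]
    refine HasFDerivAt.of_isLittleO ?_
    have h8 := h7.const_mul_left (D (h θ₀, θ₀))⁻¹
    refine h8.congr (fun θ => ?_) (fun _ => rfl)
    have htd : (InnerProductSpace.toDual ℝ (EuclideanSpace ℝ (Fin d))
        (-((D (h θ₀, θ₀))⁻¹ • V (h θ₀, θ₀)))) (θ - θ₀)
        = -((D (h θ₀, θ₀))⁻¹ * (inner ℝ (V (h θ₀, θ₀)) (θ - θ₀) : ℝ)) := by
      rw [InnerProductSpace.toDual_apply_apply, inner_neg_left, real_inner_smul_left]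
    rw [htd]
    field_simp
    ring
  -- continuity of the gradient expression
  have main2 : ContinuousOn (fun θ => -((D (h θ, θ))⁻¹ • V (h θ, θ))) B := by
    intro θ₀ hθ₀
    apply ContinuousAt.continuousWithinAt
    have hφ : ContinuousAt (fun θ => ((h θ, θ) : ℝ × EuclideanSpace ℝ (Fin d))) θ₀ :=
      (hhcont θ₀ hθ₀).prodMk continuousAt_id
    have hDc : ContinuousAt (fun θ => D (h θ, θ)) θ₀ :=
      ContinuousAt.comp (f := fun θ => ((h θ, θ) : ℝ × EuclideanSpace ℝ (Fin d)))
        ((key (h θ₀, θ₀) hθ₀).2.2.2.1) hφ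
    have hVc : ContinuousAt (fun θ => V (h θ, θ)) θ₀ :=
      ContinuousAt.comp (f := fun θ => ((h θ, θ) : ℝ × EuclideanSpace ℝ (Fin d)))
        ((key (h θ₀, θ₀) hθ₀).2.2.2.2) hφ
    exact ((hDc.inv₀ (hD0pos θ₀ hθ₀).ne').smul hVc).neg
  exact ⟨fun θ hθ => main1 θ hθ, main2⟩
end
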